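/- arXiv:2112.01233 — 9 statements merged into one kernel-verified Lean document; each statement's English description precedes it below -/
import Mathlib

section
/- Hardy's inequality for p = 2: for any sequence a : ℕ+ → ℝ≥0, ∑_{n=1}^∞ ((1/n) ∑_{k=1}^n a_k)² ≤ 4 ∑_{n=1}^∞ a_n². -/
/-- Hardy's inequality for `p = 2`: for a nonnegative sequence `a₁, a₂, …`,
`∑_{n ≥ 1} ((1/n) ∑_{k=1}^n a_k)² ≤ 4 ∑_{n ≥ 1} a_n²`. -/
theorem hardy_inequality_p_two
    (a : ℕ → ℝ) (ha : ∀ n : ℕ, 1 ≤ n → 0 ≤ a n)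
    (hsum : Summable fun n : ℕ => a (n + 1) ^ 2) :
    (∑' n : ℕ, ((1 / ((n : ℝ) + 1)) * ∑ k ∈ Finset.range (n + 1), a (k + 1)) ^ 2) ≤
      4 * ∑' n : ℕ, a (n + 1) ^ 2 := by
  set b : ℕ → ℝ := fun n => (1 / ((n : ℝ) + 1)) * ∑ k ∈ Finset.range (n + 1), a (k + 1) with hb
  set Ta : ℝ := ∑' n : ℕ, a (n + 1) ^ 2 with hTa
  have hTa0 : 0 ≤ Ta := tsum_nonneg fun n => sq_nonneg _
  -- a (n+1) = (n+1) * b n - n * b (n-1)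
  have hA : ∀ n : ℕ, ((n : ℝ) + 1) * b n = ∑ k ∈ Finset.range (n + 1), a (k + 1) := by
    intro n
    simp only [hb]
    field_simp
  have hrel : ∀ n : ℕ, a (n + 2) = ((n : ℝ) + 2) * b (n + 1) - ((n : ℝ) + 1) * b n := by
    intro n
    have h1 := hA n
    have h2 := hA (n + 1)
    push_cast at h2
    rw [Finset.sum_range_succ] at h2
    nlinarith [h1, h2]
  -- key induction: ∑_{j<N+1} b j ^ 2 + (N+1) * b N ^ 2 ≤ 2 ∑_{j<N+1} a(j+1) * b j
  have key : ∀ N : ℕ, ∑ j ∈ Finset.range (N + 1), b j ^ 2 + ((N : ℝ) + 1) * b N ^ 2 ≤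
      2 * ∑ j ∈ Finset.range (N + 1), a (j + 1) * b j := by
    intro N
    induction N with
    | zero =>
      have : b 0 = a 1 := by simp [hb]
      simp [this]
      nlinarith [sq_nonneg (a 1)]
    | succ n ih =>
      rw [Finset.sum_range_succ, Finset.sum_range_succ (f := fun j => a (j + 1) * b j)]
      have hr : a (n + 1 + 1) = ((n : ℝ) + 2) * b (n + 1) - ((n : ℝ) + 1) * b n := hrel n
      rw [hr]
      push_cast
      push_cast at ih
      nlinarith [mul_nonneg (by positivity : (0:ℝ) ≤ (n : ℝ) + 1)
        (sq_nonneg (b n - b (n + 1)))]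
  -- partial sums of b^2 are ≤ 4 * Ta
  have bound : ∀ N : ℕ, ∑ j ∈ Finset.range N, b j ^ 2 ≤ 4 * Ta := by
    intro N
    cases N with
    | zero => simpa using by positivity
    | succ N =>
      set S : ℝ := ∑ j ∈ Finset.range (N + 1), b j ^ 2 with hS
      have hS0 : 0 ≤ S := Finset.sum_nonneg fun j _ => sq_nonneg _
      have h1 : S ≤ 2 * ∑ j ∈ Finset.range (N + 1), a (j + 1) * b j := by
        have := key N
        nlinarith [mul_nonneg (by positivity : (0:ℝ) ≤ (N : ℝ) + 1) (sq_nonneg (b N))]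
      have hcs : (∑ j ∈ Finset.range (N + 1), a (j + 1) * b j) ^ 2 ≤
          (∑ j ∈ Finset.range (N + 1), a (j + 1) ^ 2) * S :=
        Finset.sum_mul_sq_le_sq_mul_sq _ _ _
      have hpart : ∑ j ∈ Finset.range (N + 1), a (j + 1) ^ 2 ≤ Ta :=
        Summable.sum_le_tsum _ (fun j _ => sq_nonneg _) hsum
      have hab0 : 0 ≤ ∑ j ∈ Finset.range (N + 1), a (j + 1) * b j := by linarith
      have h2 : S ^ 2 ≤ 4 * (Ta * S) := by
        nlinarith [hcs, hpart, hab0, hS0,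
          mul_le_mul_of_nonneg_right hpart hS0]
      rcases eq_or_lt_of_le hS0 with h | h
      · rw [← h]; positivity
      · nlinarith
  exact Real.tsum_le_of_sum_range_le (fun n => sq_nonneg _) bound
end

section
/- Let T_n(t) = e^{tni}·[[e^{it/n}, n sin(t/n)], [0, e^{−it/n}]] for integers n ≥ 2. Then sup_{n≥2} ‖T_n(t)‖ grows linearly in t: there exist constants 0 < c ≤ C and t₀ ≥ 0 such that c·t ≤ sup_{n≥2} ‖T_n(t)‖ ≤ C·t for all t ≥ t₀. -/
open Complex

/-- `T_n(t) = e^{tni}·[[e^{it/n}, n sin(t/n)], [0, e^{-it/n}]]` for `n ≥ 2`. -/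
noncomputable def battyT (n : ℕ) (t : ℝ) : Matrix (Fin 2) (Fin 2) ℂ :=
  Complex.exp ((t : ℂ) * n * I) •
    !![Complex.exp (I * t / n), (n : ℂ) * Complex.sin ((t : ℂ) / n);
       0, Complex.exp (-I * t / n)]

/-- The Euclidean operator norm of a `2 × 2` complex matrix. -/
noncomputable def opNorm2 (M : Matrix (Fin 2) (Fin 2) ℂ) : ℝ :=
  ‖Matrix.toEuclideanCLM (𝕜 := ℂ) M‖

open Matrix

/-- component norm bound in EuclideanSpace -/
lemma euclid_comp_le (y : EuclideanSpace ℂ (Fin 2)) (i : Fin 2) : ‖y i‖ ≤ ‖y‖ := by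
  rw [EuclideanSpace.norm_eq]
  have : ‖y i‖ = Real.sqrt (‖y i‖^2) := (Real.sqrt_sq (norm_nonneg _)).symm
  rw [this]
  apply Real.sqrt_le_sqrt
  exact Finset.single_le_sum (f := fun k => ‖y k‖^2) (fun k _ => sq_nonneg _)
    (Finset.mem_univ i)

lemma entry_le_opNorm2 (M : Matrix (Fin 2) (Fin 2) ℂ) (i j : Fin 2) :
    ‖M i j‖ ≤ opNorm2 M := by
  unfold opNorm2
  set T := Matrix.toEuclideanCLM (𝕜 := ℂ) M
  have hx : ‖EuclideanSpace.single j (1:ℂ)‖ = 1 := by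
    simp [EuclideanSpace.norm_single]
  have hMij : (T (EuclideanSpace.single j (1:ℂ))) i = M i j := by
    show ((WithLp.equiv 2 _).symm (M *ᵥ Pi.single j 1) : EuclideanSpace ℂ (Fin 2)) i = M i j
    simp [Matrix.mulVec_single]
  calc ‖M i j‖ = ‖(T (EuclideanSpace.single j (1:ℂ))) i‖ := by rw [hMij]
    _ ≤ ‖T (EuclideanSpace.single j (1:ℂ))‖ := euclid_comp_le _ i
    _ ≤ ‖T‖ * ‖EuclideanSpace.single j (1:ℂ)‖ := T.le_opNorm _
    _ = ‖T‖ := by rw [hx, mul_one]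

lemma opNorm2_le_sum (M : Matrix (Fin 2) (Fin 2) ℂ) :
    opNorm2 M ≤ ∑ i : Fin 2, ∑ j : Fin 2, ‖M i j‖ := by
  unfold opNorm2
  apply ContinuousLinearMap.opNorm_le_bound _
    (Finset.sum_nonneg fun i _ => Finset.sum_nonneg fun j _ => norm_nonneg _)
  intro x
  set T := Matrix.toEuclideanCLM (𝕜 := ℂ) M
  have hrow : ∀ i : Fin 2, ‖(T x) i‖ ≤ (∑ j : Fin 2, ‖M i j‖) * ‖x‖ := by
    intro i
    have : (T x) i = ∑ j : Fin 2, M i j * x j := by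
      show (M *ᵥ (WithLp.equiv 2 _ x)) i = _
      simp [Matrix.mulVec, dotProduct]
    rw [this, Finset.sum_mul]
    refine (norm_sum_le _ _).trans (Finset.sum_le_sum fun j _ => ?_)
    rw [norm_mul]
    exact mul_le_mul_of_nonneg_left (euclid_comp_le x j) (norm_nonneg _)
  have h0 := hrow 0
  have h1 := hrow 1
  rw [EuclideanSpace.norm_eq, Fin.sum_univ_two]
  set a := (∑ j : Fin 2, ‖M 0 j‖) * ‖x‖
  set b := (∑ j : Fin 2, ‖M 1 j‖) * ‖x‖
  have ha : 0 ≤ a := mul_nonneg (Finset.sum_nonneg fun j _ => norm_nonneg _) (norm_nonneg _)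
  have hb : 0 ≤ b := mul_nonneg (Finset.sum_nonneg fun j _ => norm_nonneg _) (norm_nonneg _)
  have : Real.sqrt (‖(T x) 0‖^2 + ‖(T x) 1‖^2) ≤ Real.sqrt ((a + b)^2) := by
    apply Real.sqrt_le_sqrt
    nlinarith [norm_nonneg ((T x) 0), norm_nonneg ((T x) 1)]
  calc Real.sqrt (‖(T x) 0‖^2 + ‖(T x) 1‖^2) ≤ Real.sqrt ((a+b)^2) := this
    _ = a + b := Real.sqrt_sq (by linarith)
    _ = (∑ i : Fin 2, ∑ j : Fin 2, ‖M i j‖) * ‖x‖ := by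
        rw [Fin.sum_univ_two, add_mul]

lemma battyT_entries (n : ℕ) (hn : 1 ≤ n) (t : ℝ) :
    ‖battyT n t 0 0‖ = 1 ∧ ‖battyT n t 0 1‖ = n * |Real.sin (t/n)| ∧
    ‖battyT n t 1 0‖ = 0 ∧ ‖battyT n t 1 1‖ = 1 := by
  have hu : ‖Complex.exp ((t : ℂ) * n * I)‖ = 1 := by
    rw [Complex.norm_exp]
    simp
  have h00 : ‖Complex.exp (I * t / n)‖ = 1 := by
    rw [Complex.norm_exp]
    simp [div_eq_mul_inv]
  have h11 : ‖Complex.exp (-I * t / n)‖ = 1 := by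
    rw [Complex.norm_exp]
    simp [div_eq_mul_inv]
  have hsin : Complex.sin ((t : ℂ) / n) = ((Real.sin (t / n) : ℝ) : ℂ) := by
    rw [Complex.ofReal_sin]
    norm_cast
  refine ⟨?_, ?_, ?_, ?_⟩
  · have h : battyT n t 0 0 = Complex.exp ((t : ℂ) * n * I) * Complex.exp (I * t / n) := by
      simp [battyT]
    rw [h, norm_mul, hu, h00, one_mul]
  · have h : battyT n t 0 1 =
        Complex.exp ((t : ℂ) * n * I) * ((n : ℂ) * Complex.sin ((t : ℂ) / n)) := by
      simp [battyT]
    rw [h, norm_mul, hu, one_mul, norm_mul, hsin, Complex.norm_real, Complex.norm_natCast,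
      Real.norm_eq_abs]
  · have h : battyT n t 1 0 = 0 := by simp [battyT]
    rw [h, norm_zero]
  · have h : battyT n t 1 1 = Complex.exp ((t : ℂ) * n * I) * Complex.exp (-I * t / n) := by
      simp [battyT]
    rw [h, norm_mul, hu, h11, one_mul]

/-- `sup_{n ≥ 2} ‖T_n(t)‖` grows linearly: there are `0 < c ≤ C` and `t₀ ≥ 0` such that
`c t ≤ sup_{n ≥ 2} ‖T_n(t)‖ ≤ C t` for all `t ≥ t₀`. -/
theorem sup_battyT_norm_linear :
    ∃ c C t₀ : ℝ, 0 < c ∧ c ≤ C ∧ 0 ≤ t₀ ∧ ∀ t : ℝ, t₀ ≤ t →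
      c * t ≤ (⨆ n : {m : ℕ // 2 ≤ m}, opNorm2 (battyT n t)) ∧
      (⨆ n : {m : ℕ // 2 ≤ m}, opNorm2 (battyT n t)) ≤ C * t := by
  haveI : Nonempty {m : ℕ // 2 ≤ m} := ⟨⟨2, le_rfl⟩⟩
  refine ⟨3/4, 2, 2, by norm_num, by norm_num, by norm_num, fun t ht => ?_⟩
  have ht0 : (0:ℝ) < t := by linarith
  -- upper bound for every n ≥ 2
  have hub : ∀ n : {m : ℕ // 2 ≤ m}, opNorm2 (battyT n t) ≤ 2 * t := by
    rintro ⟨n, hn⟩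
    have hn1 : 1 ≤ n := le_trans (by norm_num) hn
    have hnR : (0:ℝ) < n := by exact_mod_cast hn1
    obtain ⟨e00, e01, e10, e11⟩ := battyT_entries n hn1 t
    have hsin : (n:ℝ) * |Real.sin (t/n)| ≤ t := by
      have h1 : |Real.sin (t/n)| ≤ |t/n| := Real.abs_sin_le_abs
      have h2 : |t/n| = t/n := abs_of_nonneg (by positivity)
      calc (n:ℝ) * |Real.sin (t/n)| ≤ (n:ℝ) * (t/n) := by
            rw [h2] at h1; exact mul_le_mul_of_nonneg_left h1 hnR.le
        _ = t := by field_simp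
    calc opNorm2 (battyT n t) ≤ ∑ i : Fin 2, ∑ j : Fin 2, ‖battyT n t i j‖ :=
          opNorm2_le_sum _
      _ = 1 + (n:ℝ) * |Real.sin (t/n)| + (0 + 1) := by
          rw [Fin.sum_univ_two, Fin.sum_univ_two, Fin.sum_univ_two, e00, e01, e10, e11]
      _ ≤ 1 + t + (0 + 1) := by linarith
      _ ≤ 2 * t := by linarith
  have hbdd : BddAbove (Set.range fun n : {m : ℕ // 2 ≤ m} => opNorm2 (battyT n t)) :=
    ⟨2 * t, by rintro _ ⟨n, rfl⟩; exact hub n⟩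
  constructor
  · -- lower bound: pick n = ⌈t⌉₊
    set n : ℕ := ⌈t⌉₊ with hn
    have hn2 : 2 ≤ n := by
      have : (2:ℕ) = ⌈(2:ℝ)⌉₊ := by simp
      rw [this]; exact Nat.ceil_le_ceil ht
    have hn1 : 1 ≤ n := le_trans (by norm_num) hn2
    have htn : t ≤ n := Nat.le_ceil t
    have hnt : (n:ℝ) ≤ 2 * t := by
      have := Nat.ceil_lt_add_one ht0.le
      linarith
    have hnR : (0:ℝ) < n := by exact_mod_cast hn1
    set x : ℝ := t / n with hx
    have hx1 : x ≤ 1 := by rw [hx, div_le_one hnR]; exact htn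
    have hx2 : 1/2 ≤ x := by
      rw [hx, le_div_iff₀ hnR]; linarith
    have hx0 : 0 < x := by linarith
    have hsin : 3/4 * x ≤ Real.sin x := by
      have h := Real.sin_gt_sub_cube hx0
      nlinarith [sq_nonneg x, sq_nonneg (1 - x)]
    have habs : |Real.sin x| = Real.sin x := abs_of_nonneg (by linarith)
    obtain ⟨-, e01, -, -⟩ := battyT_entries n hn1 t
    have hkey : 3/4 * t ≤ ‖battyT n t 0 1‖ := by
      rw [e01, ← hx, habs]
      calc 3/4 * t = (n:ℝ) * (3/4 * x) := by rw [hx]; field_simp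
        _ ≤ (n:ℝ) * Real.sin x := mul_le_mul_of_nonneg_left hsin hnR.le
    calc 3/4 * t ≤ ‖battyT n t 0 1‖ := hkey
      _ ≤ opNorm2 (battyT n t) := entry_le_opNorm2 _ _ _
      _ ≤ ⨆ m : {m : ℕ // 2 ≤ m}, opNorm2 (battyT m t) :=
          le_ciSup hbdd ⟨n, hn2⟩
  · exact ciSup_le hub
end

section
/- Let A_n = [[ni + i/n, 1], [0, ni − i/n]] for n ≥ 2. Then A_n is invertible, and T_n(t)·A_n^{-1} = (in/(1 − n⁴))·e^{tni}·[[(n²−1)e^{it/n}, (n²−1)n sin(t/n) + i n e^{−it/n}], [0, (n²+1)e^{−it/n}]], where T_n(t) = e^{tA_n}. -/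
open Complex

noncomputable def battyA (n : ℕ) : Matrix (Fin 2) (Fin 2) ℂ :=
  !![(n : ℂ) * I + I / n, 1; 0, (n : ℂ) * I - I / n]

private lemma batty_I3 : I ^ 3 = -I := by
  rw [pow_succ, Complex.I_sq]; ring

private lemma batty_I4 : I ^ 4 = 1 := by
  rw [pow_succ, batty_I3]; simp [Complex.I_mul_I]

private lemma batty_diag_fin_two (x y : ℂ) :
    Matrix.diagonal ![x, y] = !![x, 0; 0, y] := by
  ext i j
  fin_cases i <;> fin_cases j <;> simp [Matrix.diagonal]

set_option maxHeartbeats 2000000 in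
/-- For `n ≥ 2`, `A_n` is invertible and
`T_n(t)·A_n⁻¹ = (in/(1-n⁴))·e^{tni}·[[(n²-1)e^{it/n}, (n²-1)n sin(t/n) + i n e^{-it/n}],
[0, (n²+1)e^{-it/n}]]` where `T_n(t) = e^{tA_n}`. -/
theorem battyT_mul_inv (n : ℕ) (hn : 2 ≤ n) :
    IsUnit (battyA n) ∧ ∀ t : ℝ,
      NormedSpace.exp ((t : ℂ) • battyA n) * (battyA n)⁻¹ =
        ((I * n) / (1 - (n : ℂ) ^ 4)) •
          Complex.exp ((t : ℂ) * n * I) •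
            !![((n : ℂ) ^ 2 - 1) * Complex.exp (I * t / n),
                ((n : ℂ) ^ 2 - 1) * n * Complex.sin ((t : ℂ) / n)
                  + I * n * Complex.exp (-I * t / n);
               0, ((n : ℂ) ^ 2 + 1) * Complex.exp (-I * t / n)] := by
  have hn0 : (n : ℂ) ≠ 0 := Nat.cast_ne_zero.mpr (by omega)
  have hn1 : (n : ℂ) ^ 4 ≠ 1 := by
    have h16 : 2 ^ 4 ≤ n ^ 4 := Nat.pow_le_pow_left hn 4
    have : (n : ℕ) ^ 4 ≠ 1 := by omega
    exact_mod_cast fun h => this (by exact_mod_cast h)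
  have hn4 : (1 : ℂ) - (n : ℂ) ^ 4 ≠ 0 := sub_ne_zero.mpr (Ne.symm hn1)
  obtain ⟨a, ha⟩ : ∃ x : ℂ, x = (n : ℂ) * I + I / n := ⟨_, rfl⟩
  obtain ⟨b, hb⟩ : ∃ x : ℂ, x = (n : ℂ) * I - I / n := ⟨_, rfl⟩
  have hA : battyA n = !![a, 1; 0, b] := by rw [battyA, ha, hb]
  have hab : a * b = (1 - (n:ℂ)^4) / (n:ℂ)^2 := by
    rw [ha, hb]
    field_simp
    ring_nf
    simp [Complex.I_sq]
    ring
  have hab0 : a * b ≠ 0 := hab ▸ div_ne_zero hn4 (pow_ne_zero _ hn0)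
  have ha0 : a ≠ 0 := left_ne_zero_of_mul hab0
  have hb0 : b ≠ 0 := right_ne_zero_of_mul hab0
  obtain ⟨W, hW⟩ : ∃ M : Matrix (Fin 2) (Fin 2) ℂ,
      M = !![I*n*((n:ℂ)^2-1)/(1-(n:ℂ)^4), -(n:ℂ)^2/(1-(n:ℂ)^4);
             0, I*n*((n:ℂ)^2+1)/(1-(n:ℂ)^4)] := ⟨_, rfl⟩
  have hAW : battyA n * W = 1 := by
    rw [hA, hW, ha, hb, Matrix.mul_fin_two]
    ext i j
    fin_cases i <;> fin_cases j <;>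
      simp <;> field_simp <;> ring_nf <;>
      simp [Complex.I_sq, batty_I3, batty_I4] <;> ring_nf <;> (try field_simp) <;>
      (try ring)
  have hUnit : IsUnit (battyA n) := by
    rw [Matrix.isUnit_iff_isUnit_det, hA, Matrix.det_fin_two_of]
    simpa using hab0.isUnit
  refine ⟨hUnit, fun t => ?_⟩
  have hAinv : (battyA n)⁻¹ = W := Matrix.inv_eq_right_inv hAW
  obtain ⟨U, hU⟩ : ∃ M : Matrix (Fin 2) (Fin 2) ℂ, M = !![1, 1; 0, -2*I/n] := ⟨_, rfl⟩
  obtain ⟨V, hV⟩ : ∃ M : Matrix (Fin 2) (Fin 2) ℂ,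
      M = !![1, -((n:ℂ)*I/2); 0, (n:ℂ)*I/2] := ⟨_, rfl⟩
  have hUV : U * V = 1 := by
    rw [hU, hV, Matrix.mul_fin_two]
    ext i j
    fin_cases i <;> fin_cases j <;> simp <;>
      field_simp <;> ring_nf <;> simp [Complex.I_sq]
  have hUu : IsUnit U := by
    rw [Matrix.isUnit_iff_isUnit_det, hU, Matrix.det_fin_two_of]
    simp only [one_mul, mul_one, mul_zero, sub_zero, zero_mul]
    exact ((div_ne_zero (by simp [Complex.I_ne_zero]) hn0)).isUnit
  have hUinv : U⁻¹ = V := Matrix.inv_eq_right_inv hUV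
  obtain ⟨D, hD⟩ : ∃ M : Matrix (Fin 2) (Fin 2) ℂ,
      M = Matrix.diagonal ![(t:ℂ) * a, (t:ℂ) * b] := ⟨_, rfl⟩
  have hconj : (t : ℂ) • battyA n = U * D * U⁻¹ := by
    rw [hUinv, hU, hV, hD, hA, ha, hb, batty_diag_fin_two,
      Matrix.mul_fin_two, Matrix.mul_fin_two]
    ext i j
    fin_cases i <;> fin_cases j <;>
      simp [Matrix.smul_apply] <;> field_simp <;> ring_nf <;>
      simp [Complex.I_sq, batty_I3, batty_I4] <;> ring_nf
  have hexp : NormedSpace.exp ((t : ℂ) • battyA n) =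
      U * Matrix.diagonal ![Complex.exp ((t:ℂ)*a), Complex.exp ((t:ℂ)*b)] * V := by
    have hpi : NormedSpace.exp ![(t:ℂ)*a, (t:ℂ)*b]
        = ![Complex.exp ((t:ℂ)*a), Complex.exp ((t:ℂ)*b)] := by
      rw [Pi.exp_def]
      funext i
      fin_cases i <;> simp [Complex.exp_eq_exp_ℂ]
    rw [hconj, Matrix.exp_conj U D hUu, hUinv, hD, Matrix.exp_diagonal, hpi]
  obtain ⟨E, hE⟩ : ∃ x, x = Complex.exp ((t:ℂ) * n * I) := ⟨_, rfl⟩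
  obtain ⟨X, hX⟩ : ∃ x, x = Complex.exp (I * t / n) := ⟨_, rfl⟩
  obtain ⟨Y, hY⟩ : ∃ x, x = Complex.exp (-I * t / n) := ⟨_, rfl⟩
  have hX0 : X ≠ 0 := hX ▸ Complex.exp_ne_zero _
  have hYX : Y = X⁻¹ := by
    rw [hX, hY, ← Complex.exp_neg]
    congr 1; ring
  have hXa : Complex.exp ((t:ℂ)*a) = E * X := by
    rw [hE, hX, ha, ← Complex.exp_add]; congr 1; field_simp
  have hXb : Complex.exp ((t:ℂ)*b) = E * Y := by
    rw [hE, hY, hb, ← Complex.exp_add]; congr 1; field_simp; ring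
  have hsin : Complex.sin ((t:ℂ)/n) = (Y - X) * I / 2 := by
    rw [Complex.sin, hX, hY,
      show -((t:ℂ)/n) * I = -I * t / n by ring,
      show ((t:ℂ)/n) * I = I * t / n by ring]
  have hd : X * 4 - X * (n:ℂ)^4 * 8 + X * (n:ℂ)^8 * 4 ≠ 0 := by
    have : X * 4 - X * (n:ℂ)^4 * 8 + X * (n:ℂ)^8 * 4 = 4 * X * (1 - (n:ℂ)^4)^2 := by ring
    rw [this]
    exact mul_ne_zero (mul_ne_zero (by norm_num) hX0) (pow_ne_zero _ hn4)
  rw [hexp, hAinv, hW, hU, hV, hXa, hXb, ← hE, ← hX, ← hY, hsin,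
    batty_diag_fin_two, Matrix.mul_fin_two, Matrix.mul_fin_two, Matrix.mul_fin_two]
  ext i j
  fin_cases i <;> fin_cases j <;>
    simp [Matrix.smul_apply, hYX] <;>
    field_simp <;> ring_nf <;> simp [Complex.I_sq, batty_I3, batty_I4] <;> ring_nf
  all_goals
    have hc : (X * 4 - X * (n:ℂ)^4 * 8 + X * (n:ℂ)^8 * 4) *
        (X * 4 - X * (n:ℂ)^4 * 8 + X * (n:ℂ)^8 * 4)⁻¹ = 1 := mul_inv_cancel₀ hd
  all_goals
    linear_combination (-(E * X * (n:ℂ) ^ 2) + (-(E * X * (n:ℂ) ^ 4) - E * X ^ 3 * (n:ℂ) ^ 2)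
      + E * X ^ 3 * (n:ℂ) ^ 4) * hc
end

section
/- With A_n and T_n(t) = e^{tA_n} as above, the family sup_{n≥2} ‖T_n(t) A_n^{-1}‖ is bounded above and below by positive constants uniformly in t ≥ 0: there exist 0 < m ≤ M such that m ≤ sup_{n≥2} ‖T_n(t) A_n^{-1}‖ ≤ M for all t ≥ 0. -/
open Complex

namespace BattyAux

open Matrix

/-! ### Operator norm estimates -/

lemma toEuclideanCLM_apply (M : Matrix (Fin 2) (Fin 2) ℂ) (x : EuclideanSpace ℂ (Fin 2))
    (i : Fin 2) : (Matrix.toEuclideanCLM (𝕜 := ℂ) M x) i = (M *ᵥ x) i := rfl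

lemma euclid_comp_le (y : EuclideanSpace ℂ (Fin 2)) (i : Fin 2) : ‖y i‖ ≤ ‖y‖ := by
  rw [EuclideanSpace.norm_eq]
  calc ‖y i‖ = Real.sqrt (‖y i‖ ^ 2) := by rw [Real.sqrt_sq (norm_nonneg _)]
  _ ≤ _ := by
      apply Real.sqrt_le_sqrt
      have := Finset.single_le_sum (f := fun j => ‖y j‖ ^ 2)
        (fun j _ => by positivity) (Finset.mem_univ i)
      simpa using this

lemma euclid_norm_le (y : EuclideanSpace ℂ (Fin 2)) : ‖y‖ ≤ ‖y 0‖ + ‖y 1‖ := by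
  rw [EuclideanSpace.norm_eq, Fin.sum_univ_two]
  have h := Real.sqrt_le_sqrt (show ‖y 0‖^2 + ‖y 1‖^2 ≤ (‖y 0‖ + ‖y 1‖)^2 by
    nlinarith [norm_nonneg (y 0), norm_nonneg (y 1)])
  calc Real.sqrt (‖y 0‖^2 + ‖y 1‖^2) ≤ Real.sqrt ((‖y 0‖ + ‖y 1‖)^2) := h
  _ = _ := Real.sqrt_sq (by positivity)

lemma opNorm2_entry_le (M : Matrix (Fin 2) (Fin 2) ℂ) (i j : Fin 2) :
    ‖M i j‖ ≤ opNorm2 M := by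
  have h1 : ‖Matrix.toEuclideanCLM (𝕜 := ℂ) M (EuclideanSpace.single j 1)‖ ≤ opNorm2 M := by
    have := (Matrix.toEuclideanCLM (𝕜 := ℂ) M).le_opNorm (EuclideanSpace.single j 1)
    simpa [EuclideanSpace.norm_single, opNorm2] using this
  refine le_trans ?_ h1
  have h2 : (Matrix.toEuclideanCLM (𝕜 := ℂ) M (EuclideanSpace.single j 1)) i = M i j := by
    rw [toEuclideanCLM_apply]
    simp [Matrix.mulVec, dotProduct, EuclideanSpace.single_apply]
  exact h2 ▸ euclid_comp_le _ i

lemma opNorm2_le_sum (M : Matrix (Fin 2) (Fin 2) ℂ) :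
    opNorm2 M ≤ ‖M 0 0‖ + ‖M 0 1‖ + ‖M 1 0‖ + ‖M 1 1‖ := by
  apply ContinuousLinearMap.opNorm_le_bound _ (by positivity)
  intro x
  set T := Matrix.toEuclideanCLM (𝕜 := ℂ) M
  have hi : ∀ i : Fin 2, ‖(T x) i‖ ≤ (‖M i 0‖ + ‖M i 1‖) * ‖x‖ := by
    intro i
    rw [toEuclideanCLM_apply]
    have : (M *ᵥ x) i = M i 0 * x 0 + M i 1 * x 1 := by
      simp [Matrix.mulVec, dotProduct, Fin.sum_univ_two]
    rw [this]
    calc ‖M i 0 * x 0 + M i 1 * x 1‖ ≤ ‖M i 0 * x 0‖ + ‖M i 1 * x 1‖ := norm_add_le _ _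
    _ = ‖M i 0‖ * ‖x 0‖ + ‖M i 1‖ * ‖x 1‖ := by rw [norm_mul, norm_mul]
    _ ≤ ‖M i 0‖ * ‖x‖ + ‖M i 1‖ * ‖x‖ := by
        gcongr <;> [exact euclid_comp_le x 0; exact euclid_comp_le x 1]
    _ = (‖M i 0‖ + ‖M i 1‖) * ‖x‖ := by ring
  calc ‖T x‖ ≤ ‖(T x) 0‖ + ‖(T x) 1‖ := euclid_norm_le _
  _ ≤ (‖M 0 0‖ + ‖M 0 1‖) * ‖x‖ + (‖M 1 0‖ + ‖M 1 1‖) * ‖x‖ := add_le_add (hi 0) (hi 1)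
  _ = (‖M 0 0‖ + ‖M 0 1‖ + ‖M 1 0‖ + ‖M 1 1‖) * ‖x‖ := by ring

/-! ### Explicit computation of `exp (t • A) * A⁻¹` for triangular `A` -/

variable (a b : ℂ)

lemma tri_mul_inv (ha : a ≠ 0) (hb : b ≠ 0) :
    !![a, 1; 0, b] * !![a⁻¹, -(a*b)⁻¹; 0, b⁻¹] = 1 := by
  rw [Matrix.mul_fin_two, Matrix.one_fin_two]
  ext i j
  fin_cases i <;> fin_cases j <;> simp <;> field_simp <;> ring

lemma tri_inv (ha : a ≠ 0) (hb : b ≠ 0) :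
    !![a, 1; 0, b]⁻¹ = !![a⁻¹, -(a*b)⁻¹; 0, b⁻¹] :=
  Matrix.inv_eq_right_inv (tri_mul_inv a b ha hb)

lemma PQ_mul (hd : b - a ≠ 0) :
    !![(1:ℂ), 1; 0, b - a] * !![(1:ℂ), -(b-a)⁻¹; 0, (b-a)⁻¹] = 1 := by
  rw [Matrix.mul_fin_two, Matrix.one_fin_two]
  ext i j
  fin_cases i <;> fin_cases j <;> simp <;> field_simp <;> ring

lemma QP_mul (hd : b - a ≠ 0) :
    !![(1:ℂ), -(b-a)⁻¹; 0, (b-a)⁻¹] * !![(1:ℂ), 1; 0, b - a] = 1 := by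
  rw [Matrix.mul_fin_two, Matrix.one_fin_two]
  ext i j
  fin_cases i <;> fin_cases j <;> simp <;> field_simp <;> ring

noncomputable def triU (hd : b - a ≠ 0) : (Matrix (Fin 2) (Fin 2) ℂ)ˣ :=
  ⟨!![(1:ℂ), 1; 0, b - a], !![(1:ℂ), -(b-a)⁻¹; 0, (b-a)⁻¹], PQ_mul a b hd, QP_mul a b hd⟩

lemma triU_val (hd : b - a ≠ 0) :
    (↑(triU a b hd) : Matrix (Fin 2) (Fin 2) ℂ) = !![(1:ℂ), 1; 0, b - a] := rfl

lemma triU_inv_val (hd : b - a ≠ 0) :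
    (↑(triU a b hd)⁻¹ : Matrix (Fin 2) (Fin 2) ℂ) = !![(1:ℂ), -(b-a)⁻¹; 0, (b-a)⁻¹] := rfl

lemma tri_decomp (hd : b - a ≠ 0) (t : ℂ) :
    t • !![a, 1; 0, b] =
      (↑(triU a b hd) : Matrix (Fin 2) (Fin 2) ℂ) * Matrix.diagonal ![t*a, t*b] *
        (↑(triU a b hd)⁻¹ : Matrix (Fin 2) (Fin 2) ℂ) := by
  have hD : Matrix.diagonal ![t*a, t*b] = !![t*a, 0; 0, t*b] := by
    ext i j; fin_cases i <;> fin_cases j <;> simp [Matrix.diagonal]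
  rw [hD, triU_val, triU_inv_val, Matrix.mul_fin_two, Matrix.mul_fin_two]
  ext i j
  fin_cases i <;> fin_cases j <;> simp <;> field_simp <;> ring

lemma tri_exp (hd : b - a ≠ 0) (t : ℂ) :
    NormedSpace.exp (t • !![a, 1; 0, b]) =
      !![Complex.exp (t*a), (Complex.exp (t*b) - Complex.exp (t*a)) * (b-a)⁻¹;
         0, Complex.exp (t*b)] := by
  rw [tri_decomp a b hd, Matrix.exp_units_conj, Matrix.exp_diagonal, Pi.exp_def]
  have hexp : (fun i => NormedSpace.exp (![t*a, t*b] i))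
      = ![Complex.exp (t*a), Complex.exp (t*b)] := by
    funext i; fin_cases i <;> simp [← Complex.exp_eq_exp_ℂ]
  rw [hexp]
  have hD : Matrix.diagonal ![Complex.exp (t*a), Complex.exp (t*b)] =
      !![Complex.exp (t*a), 0; 0, Complex.exp (t*b)] := by
    ext i j; fin_cases i <;> fin_cases j <;> simp [Matrix.diagonal]
  rw [hD, triU_val, triU_inv_val, Matrix.mul_fin_two, Matrix.mul_fin_two]
  ext i j
  fin_cases i <;> fin_cases j <;> simp <;> field_simp <;> ring

lemma tri_full (ha : a ≠ 0) (hb : b ≠ 0) (hd : b - a ≠ 0) (t : ℂ) :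
    NormedSpace.exp (t • !![a, 1; 0, b]) * !![a, 1; 0, b]⁻¹ =
      !![Complex.exp (t*a) * a⁻¹,
         -(Complex.exp (t*a) * (a*b)⁻¹) + (Complex.exp (t*b) - Complex.exp (t*a)) * (b-a)⁻¹ * b⁻¹;
         0, Complex.exp (t*b) * b⁻¹] := by
  rw [tri_exp a b hd, tri_inv a b ha hb, Matrix.mul_fin_two]
  ext i j
  fin_cases i <;> fin_cases j <;> simp <;> field_simp <;> ring

/-! ### Specialization to `battyA` -/

lemma norm_ofReal_mul_I (x : ℝ) : ‖((x:ℂ)) * I‖ = |x| := by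
  rw [norm_mul, Complex.norm_I, Complex.norm_real, Real.norm_eq_abs, mul_one]

lemma norm_exp_t_mul (t x : ℝ) : ‖Complex.exp ((t:ℂ) * ((x:ℂ) * I))‖ = 1 := by
  have : (t:ℂ) * ((x:ℂ) * I) = ((t*x : ℝ) : ℂ) * I := by push_cast; ring
  rw [this, Complex.norm_exp_ofReal_mul_I]

variable (n : ℕ) (hn : 2 ≤ n)

lemma battyA_eq : battyA n
    = !![((((n:ℝ) + 1/n : ℝ)):ℂ) * I, 1; 0, ((((n:ℝ) - 1/n : ℝ)):ℂ) * I] := by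
  unfold battyA
  congr 1 <;> push_cast <;> ring

include hn

lemma r1_big : (2:ℝ) ≤ (n:ℝ) + 1/n := by
  have h : (2:ℝ) ≤ (n:ℝ) := by exact_mod_cast hn
  have : (0:ℝ) < 1/(n:ℝ) := by positivity
  linarith

lemma r2_big : (3/2 : ℝ) ≤ (n:ℝ) - 1/n := by
  have h : (2:ℝ) ≤ (n:ℝ) := by exact_mod_cast hn
  have : 1/(n:ℝ) ≤ 1/2 := by
    apply one_div_le_one_div_of_le <;> linarith
  linarith

lemma l1_ne : ((((n:ℝ) + 1/n : ℝ)):ℂ) * I ≠ 0 :=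
  mul_ne_zero (ofReal_ne_zero.mpr (by have := r1_big n hn; intro h; rw [h] at this; linarith))
    I_ne_zero

lemma l2_ne : ((((n:ℝ) - 1/n : ℝ)):ℂ) * I ≠ 0 :=
  mul_ne_zero (ofReal_ne_zero.mpr (by have := r2_big n hn; intro h; rw [h] at this; linarith))
    I_ne_zero

omit hn in
lemma ld_eq : ((((n:ℝ) - 1/n : ℝ)):ℂ) * I - ((((n:ℝ) + 1/n : ℝ)):ℂ) * I
    = ((-(2/(n:ℝ)) : ℝ) : ℂ) * I := by
  push_cast; ring

lemma ld_ne : ((((n:ℝ) - 1/n : ℝ)):ℂ) * I - ((((n:ℝ) + 1/n : ℝ)):ℂ) * I ≠ 0 := by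
  rw [ld_eq n]
  have h : (2:ℝ) ≤ (n:ℝ) := by exact_mod_cast hn
  exact mul_ne_zero (ofReal_ne_zero.mpr (by intro h'; have : (2:ℝ)/(n:ℝ) = 0 := by linarith
                                            rw [div_eq_zero_iff] at this; rcases this with h''|h'' <;> linarith)) I_ne_zero

lemma batty_full (t : ℝ) :
    NormedSpace.exp ((t:ℂ) • battyA n) * (battyA n)⁻¹ =
      (fun a b => !![Complex.exp ((t:ℂ)*a) * a⁻¹,
         -(Complex.exp ((t:ℂ)*a) * (a*b)⁻¹)
           + (Complex.exp ((t:ℂ)*b) - Complex.exp ((t:ℂ)*a)) * (b-a)⁻¹ * b⁻¹;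
         0, Complex.exp ((t:ℂ)*b) * b⁻¹])
        (((((n:ℝ) + 1/n : ℝ)):ℂ) * I) (((((n:ℝ) - 1/n : ℝ)):ℂ) * I) := by
  rw [battyA_eq]
  exact tri_full _ _ (l1_ne n hn) (l2_ne n hn) (ld_ne n hn) _

lemma batty_upper (t : ℝ) :
    opNorm2 (NormedSpace.exp ((t:ℂ) • battyA n) * (battyA n)⁻¹) ≤ 3 := by
  rw [batty_full n hn t]
  set a := ((((n:ℝ) + 1/n : ℝ)):ℂ) * I with ha_def
  set b := ((((n:ℝ) - 1/n : ℝ)):ℂ) * I with hb_def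
  have hN : (2:ℝ) ≤ (n:ℝ) := by exact_mod_cast hn
  have hr1 := r1_big n hn
  have hr2 := r2_big n hn
  have hna : ‖a‖ = (n:ℝ) + 1/n := by
    rw [ha_def, norm_ofReal_mul_I, abs_of_pos (by linarith)]
  have hnb : ‖b‖ = (n:ℝ) - 1/n := by
    rw [hb_def, norm_ofReal_mul_I, abs_of_pos (by linarith)]
  have hnd : ‖b - a‖ = 2/(n:ℝ) := by
    rw [hb_def, ha_def, ld_eq n, norm_ofReal_mul_I, abs_neg, abs_of_pos (by positivity)]
  have hea : ‖Complex.exp ((t:ℂ)*a)‖ = 1 := norm_exp_t_mul t _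
  have heb : ‖Complex.exp ((t:ℂ)*b)‖ = 1 := norm_exp_t_mul t _
  refine (opNorm2_le_sum _).trans ?_
  simp only [Matrix.cons_val', Matrix.cons_val_zero, Matrix.cons_val_one, Matrix.head_cons,
    Matrix.empty_val', Matrix.cons_val_fin_one, Matrix.head_fin_const, Matrix.of_apply]
  have e00 : ‖Complex.exp ((t:ℂ)*a) * a⁻¹‖ ≤ 1/2 := by
    rw [norm_mul, hea, norm_inv, hna, one_mul]
    rw [inv_le_comm₀ (by linarith) (by norm_num)]
    linarith
  have e11 : ‖Complex.exp ((t:ℂ)*b) * b⁻¹‖ ≤ 2/3 := by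
    rw [norm_mul, heb, norm_inv, hnb, one_mul]
    rw [inv_le_comm₀ (by linarith) (by norm_num)]
    linarith
  have e01 : ‖-(Complex.exp ((t:ℂ)*a) * (a*b)⁻¹)
      + (Complex.exp ((t:ℂ)*b) - Complex.exp ((t:ℂ)*a)) * (b-a)⁻¹ * b⁻¹‖ ≤ 1/3 + 4/3 := by
    refine (norm_add_le _ _).trans (add_le_add ?_ ?_)
    · rw [norm_neg, norm_mul, hea, one_mul, norm_inv, norm_mul, hna, hnb]
      rw [inv_le_comm₀ (by nlinarith) (by norm_num)]
      nlinarith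
    · rw [norm_mul, norm_mul, norm_inv, norm_inv, hnd, hnb]
      have h1 : ‖Complex.exp ((t:ℂ)*b) - Complex.exp ((t:ℂ)*a)‖ ≤ 2 := by
        refine (norm_sub_le _ _).trans ?_
        rw [hea, heb]; norm_num
      have h2 : (2/(n:ℝ))⁻¹ = (n:ℝ)/2 := by
        rw [inv_div]
      rw [h2]
      have h3 : ((n:ℝ) - 1/n)⁻¹ ≤ ((n:ℝ) - 1/2)⁻¹ := by
        apply inv_anti₀ (by linarith)
        have : 1/(n:ℝ) ≤ 1/2 := by apply one_div_le_one_div_of_le <;> linarith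
        linarith
      calc ‖Complex.exp ((t:ℂ)*b) - Complex.exp ((t:ℂ)*a)‖ * ((n:ℝ)/2) * ((n:ℝ) - 1/n)⁻¹
          ≤ 2 * ((n:ℝ)/2) * ((n:ℝ) - 1/2)⁻¹ := by
            apply mul_le_mul (mul_le_mul h1 le_rfl (by positivity) (by norm_num)) h3
              (by positivity) (by positivity)
      _ = (n:ℝ) * ((n:ℝ) - 1/2)⁻¹ := by ring
      _ ≤ 4/3 := by
            rw [← div_eq_mul_inv, div_le_div_iff₀ (by linarith) (by norm_num)]
            linarith
  rw [norm_zero]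
  linarith

omit hn in
lemma batty_lower_two (t : ℝ) :
    (2/3 : ℝ) ≤ opNorm2 (NormedSpace.exp ((t:ℂ) • battyA 2) * (battyA 2)⁻¹) := by
  refine le_trans ?_ (opNorm2_entry_le _ 1 1)
  rw [batty_full 2 le_rfl t]
  simp only [Matrix.cons_val', Matrix.cons_val_zero, Matrix.cons_val_one, Matrix.head_cons,
    Matrix.empty_val', Matrix.cons_val_fin_one, Matrix.head_fin_const, Matrix.of_apply]
  rw [norm_mul, norm_exp_t_mul, norm_inv, norm_ofReal_mul_I, one_mul]
  push_cast
  rw [abs_of_pos (by norm_num)]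
  norm_num

end BattyAux

/-- `sup_{n ≥ 2} ‖T_n(t) A_n⁻¹‖` (with `T_n(t) = e^{tA_n}`) is bounded above and below by
positive constants, uniformly in `t ≥ 0`. -/
theorem sup_battyT_mul_inv_bounded :
    ∃ m M : ℝ, 0 < m ∧ m ≤ M ∧ ∀ t : ℝ, 0 ≤ t →
      m ≤ (⨆ n : {k : ℕ // 2 ≤ k},
              opNorm2 (NormedSpace.exp ((t : ℂ) • battyA n) * (battyA n)⁻¹)) ∧
      (⨆ n : {k : ℕ // 2 ≤ k},
          opNorm2 (NormedSpace.exp ((t : ℂ) • battyA n) * (battyA n)⁻¹)) ≤ M := by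
  refine ⟨2/3, 3, by norm_num, by norm_num, fun t ht => ?_⟩
  haveI : Nonempty {k : ℕ // 2 ≤ k} := ⟨⟨2, le_rfl⟩⟩
  set F : {k : ℕ // 2 ≤ k} → ℝ := fun n =>
    opNorm2 (NormedSpace.exp ((t : ℂ) • battyA n) * (battyA n)⁻¹) with hF
  have hbd : ∀ n : {k : ℕ // 2 ≤ k}, F n ≤ 3 := fun n => BattyAux.batty_upper n.1 n.2 t
  have hBdd : BddAbove (Set.range F) := ⟨3, by rintro _ ⟨n, rfl⟩; exact hbd n⟩
  constructor
  · refine le_trans (BattyAux.batty_lower_two t) ?_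
    exact le_ciSup hBdd ⟨2, le_rfl⟩
  · exact ciSup_le hbd
end

section
/- Let T be a strongly continuous semigroup on a Banach space X with generator A, and let T̃(t)B̃ = B̃ ∘ T(t) be the induced semigroup on the closure X̃ of {D ∘ R(μ, A) : D ∈ L(X)} in L(X). Then for every B̃ ∈ X̃ and μ in the resolvent set of A and of Ã, the resolvent identity R(μ, Ã) B̃ = B̃ ∘ R(μ, A) holds, where à is the generator of T̃. -/
open Filter Set

variable {X : Type*} [NormedAddCommGroup X] [NormedSpace ℂ X] [CompleteSpace X]

/-- A strongly continuous one-parameter semigroup of bounded operators. -/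
structure IsC0Semigroup (T : ℝ → X →L[ℂ] X) : Prop where
  map_zero : T 0 = ContinuousLinearMap.id ℂ X
  map_add : ∀ s t : ℝ, 0 ≤ s → 0 ≤ t → T (s + t) = (T s).comp (T t)
  strong_cont : ∀ x : X, ContinuousOn (fun t => T t x) (Set.Ici (0 : ℝ))

def genDom (T : ℝ → X →L[ℂ] X) : Set X :=
  {x | ∃ y : X, Tendsto (fun t : ℝ => t⁻¹ • (T t x - x)) (nhdsWithin 0 (Set.Ioi 0)) (nhds y)}

def IsGenerator (T : ℝ → X →L[ℂ] X) (A : X → X) : Prop :=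
  ∀ x ∈ genDom T,
    Tendsto (fun t : ℝ => t⁻¹ • (T t x - x)) (nhdsWithin 0 (Set.Ioi 0)) (nhds (A x))

/-- The space `X̃`: the operator-norm closure of `{D ∘ R₀ : D ∈ L(X)}`, where `R₀` is a
fixed resolvent operator of the generator. -/
def tildeSpace (R₀ : X →L[ℂ] X) : Set (X →L[ℂ] X) :=
  closure {B : X →L[ℂ] X | ∃ D : X →L[ℂ] X, B = D.comp R₀}

/-- The domain of the generator `Ã` of the induced semigroup `T̃(t)B = B ∘ T(t)` on `X̃`. -/
def tildeGenDom (T : ℝ → X →L[ℂ] X) (R₀ : X →L[ℂ] X) : Set (X →L[ℂ] X) :=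
  {B ∈ tildeSpace R₀ | ∃ C : X →L[ℂ] X,
    Tendsto (fun t : ℝ => t⁻¹ • (B.comp (T t) - B)) (nhdsWithin 0 (Set.Ioi 0)) (nhds C)}

/-- `Ã` is the generator of the induced semigroup `T̃(t)B = B ∘ T(t)`. -/
def IsTildeGenerator (T : ℝ → X →L[ℂ] X) (R₀ : X →L[ℂ] X)
    (Atil : (X →L[ℂ] X) → (X →L[ℂ] X)) : Prop :=
  ∀ B ∈ tildeGenDom T R₀,
    Tendsto (fun t : ℝ => t⁻¹ • (B.comp (T t) - B)) (nhdsWithin 0 (Set.Ioi 0))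
      (nhds (Atil B))

/-- For the induced semigroup `T̃(t)B̃ = B̃ ∘ T(t)` on
`X̃ = closure {D ∘ R(μ₀, A) : D ∈ L(X)}`, the resolvent of its generator `Ã` at any common
resolvent point `μ` satisfies `R(μ, Ã) B̃ = B̃ ∘ R(μ, A)` for all `B̃ ∈ X̃`. -/
theorem tilde_resolvent_identity
    (T : ℝ → X →L[ℂ] X) (hT : IsC0Semigroup T)
    (A : X → X) (hA : IsGenerator T A)
    -- `R₀` is a resolvent operator of `A` at some point `μ₀ ∉ σ(A)`:
    (μ₀ : ℂ) (R₀ : X →L[ℂ] X)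
    (hR₀dom : ∀ x, R₀ x ∈ genDom T)
    (hR₀right : ∀ x, A (R₀ x) - μ₀ • R₀ x = x)
    (hR₀left : ∀ x ∈ genDom T, R₀ (A x - μ₀ • x) = x)
    -- `Ã` is the generator of the induced semigroup on `X̃`:
    (Atil : (X →L[ℂ] X) → (X →L[ℂ] X)) (hAtil : IsTildeGenerator T R₀ Atil)
    -- `μ` is in the resolvent set of `A`, with resolvent `Rμ`:
    (μ : ℂ) (Rμ : X →L[ℂ] X)
    (hRμdom : ∀ x, Rμ x ∈ genDom T)
    (hRμright : ∀ x, A (Rμ x) - μ • Rμ x = x)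
    (hRμleft : ∀ x ∈ genDom T, Rμ (A x - μ • x) = x)
    -- `μ` is in the resolvent set of `Ã`, with resolvent `Rtil` (acting on `X̃`):
    (Rtil : (X →L[ℂ] X) → (X →L[ℂ] X))
    (hRtildom : ∀ B ∈ tildeSpace R₀, Rtil B ∈ tildeGenDom T R₀)
    (hRtilright : ∀ B ∈ tildeSpace R₀, Atil (Rtil B) - μ • Rtil B = B)
    (hRtilleft : ∀ B ∈ tildeGenDom T R₀, Rtil (Atil B - μ • B) = B) :
    ∀ B ∈ tildeSpace R₀, Rtil B = B.comp Rμ := by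
  intro B hB
  set C := Rtil B with hC
  have hCdom : C ∈ tildeGenDom T R₀ := hRtildom B hB
  have hlim := hAtil C hCdom
  have hright := hRtilright B hB
  -- Key fact: `Ã C` agrees with `C ∘ A` on the domain of `A`.
  have key : ∀ x ∈ genDom T, (Atil C) x = C (A x) := by
    intro x hx
    have h1 : Tendsto (fun t : ℝ => t⁻¹ • (C (T t x) - C x))
        (nhdsWithin 0 (Set.Ioi 0)) (nhds ((Atil C) x)) := by
      have := ((ContinuousLinearMap.apply ℂ X x).continuous.tendsto (Atil C)).comp hlim
      simpa [Function.comp_def] using this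
    have h2 : Tendsto (fun t : ℝ => t⁻¹ • (C (T t x) - C x))
        (nhdsWithin 0 (Set.Ioi 0)) (nhds (C (A x))) := by
      have := (C.continuous.tendsto (A x)).comp (hA x hx)
      simpa [Function.comp_def, map_sub, map_smul] using this
    exact tendsto_nhds_unique h1 h2
  ext y
  have hy := hRμdom y
  have calc1 : C y = B (Rμ y) := by
    calc C y = C (A (Rμ y) - μ • Rμ y) := by rw [hRμright]
      _ = C (A (Rμ y)) - μ • C (Rμ y) := by rw [map_sub, map_smul]
      _ = (Atil C) (Rμ y) - μ • C (Rμ y) := by rw [key _ hy]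
      _ = (Atil C - μ • C) (Rμ y) := by simp
      _ = B (Rμ y) := by rw [hright]
  simpa using calc1
end

section
/- Let H be a separable Hilbert space with orthonormal basis (e_n)_{n≥0}, and define T(t)e_0 = e^{it}e_0, T(t)e_{2k−1} = e^{(ik−1/k)t}e_{2k−1}, T(t)e_{2k} = e^{(ik−1/k)t}(t·e_{2k−1} + e_{2k}) for k ≥ 1. Then on each invariant 2-dimensional block span{e_{2k−1}, e_{2k}}, the operator norm ‖T(t)|_{H_k}‖ satisfies ‖T(t)|_{H_k}‖ ≥ t·e^{−t/k}, and consequently sup over k gives ‖T(t)‖ ≥ c·t for some c > 0 and all t ≥ 1. -/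
open Complex

set_option synthInstance.maxHeartbeats 400000

/-- The block `T(t)|_{H_k} = e^{(ik - 1/k)t}·[[1, t], [0, 1]]` on `H_k = span{e_{2k-1}, e_{2k}}`. -/
noncomputable def blockT (k : ℕ) (t : ℝ) : Matrix (Fin 2) (Fin 2) ℂ :=
  Complex.exp (((k : ℂ) * I - 1 / k) * t) • !![1, (t : ℂ); 0, 1]

lemma aux_smul (k : ℕ) (hk : 1 ≤ k) (t : ℝ) :
    opNorm2 (blockT k t) = Real.exp (-t / k) * opNorm2 !![1, (t : ℂ); 0, 1] := by
  have hk0 : (k : ℝ) ≠ 0 := by positivity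
  unfold opNorm2 blockT
  rw [map_smul]
  rw [norm_smul (cexp (((k : ℂ) * I - 1 / k) * t))
    (Matrix.toEuclideanCLM (𝕜 := ℂ) !![1, (t : ℂ); 0, 1])]
  rw [Complex.norm_exp]
  congr 2
  simp [Complex.mul_re, Complex.div_re, Complex.normSq]
  field_simp

lemma aux_base (t : ℝ) (ht : 0 ≤ t) : t ≤ opNorm2 !![1, (t : ℂ); 0, 1] := by
  set A : Matrix (Fin 2) (Fin 2) ℂ := !![1, (t : ℂ); 0, 1]
  set x : EuclideanSpace ℂ (Fin 2) := (WithLp.equiv _ _).symm ![0, 1]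
  have hx : ‖x‖ = 1 := by
    simp [x, EuclideanSpace.norm_eq, Fin.sum_univ_two]
  have happ : Matrix.toEuclideanCLM (𝕜 := ℂ) A x = (WithLp.equiv _ _).symm ![(t : ℂ), 1] := by
    rw [WithLp.equiv_symm_apply, Matrix.toEuclideanCLM_toLp]
    congr 1
    funext i
    fin_cases i <;> simp [A, Matrix.mulVec, dotProduct, Fin.sum_univ_two]
  have hnorm : t ≤ ‖Matrix.toEuclideanCLM (𝕜 := ℂ) A x‖ := by
    rw [happ]
    have : ‖(WithLp.equiv 2 (Fin 2 → ℂ)).symm ![(t : ℂ), 1]‖ = Real.sqrt (t ^ 2 + 1) := by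
      simp [EuclideanSpace.norm_eq, Fin.sum_univ_two, Complex.norm_real, _root_.abs_of_nonneg ht]
    rw [this]
    nlinarith [Real.sq_sqrt (by positivity : (0:ℝ) ≤ t ^ 2 + 1),
      Real.sqrt_nonneg (t ^ 2 + 1)]
  calc t ≤ ‖Matrix.toEuclideanCLM (𝕜 := ℂ) A x‖ := hnorm
    _ ≤ opNorm2 A * ‖x‖ := (Matrix.toEuclideanCLM (𝕜 := ℂ) A).le_opNorm x
    _ = opNorm2 A := by rw [hx, mul_one]

/-- On each two-dimensional block, `‖T(t)|_{H_k}‖ ≥ t e^{-t/k}` (for `t ≥ 0`), and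
consequently `sup_k ‖T(t)|_{H_k}‖ ≥ c t` for some `c > 0` and all `t ≥ 1`. -/
theorem blockT_norm_lower :
    (∀ k : ℕ, 1 ≤ k → ∀ t : ℝ, 0 ≤ t →
        t * Real.exp (-t / k) ≤ opNorm2 (blockT k t)) ∧
    ∃ c : ℝ, 0 < c ∧ ∀ t : ℝ, 1 ≤ t →
        c * t ≤ ⨆ k : {m : ℕ // 1 ≤ m}, opNorm2 (blockT k t) := by
  have h1 : ∀ k : ℕ, 1 ≤ k → ∀ t : ℝ, 0 ≤ t →
      t * Real.exp (-t / k) ≤ opNorm2 (blockT k t) := by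
    intro k hk t ht
    rw [aux_smul k hk t, mul_comm]
    exact mul_le_mul_of_nonneg_left (aux_base t ht) (Real.exp_pos _).le
  refine ⟨h1, Real.exp (-1), Real.exp_pos _, fun t ht => ?_⟩
  have ht0 : 0 ≤ t := le_trans zero_le_one ht
  set k : ℕ := ⌈t⌉₊ with hkdef
  have hk1 : 1 ≤ k := Nat.one_le_ceil_iff.mpr (lt_of_lt_of_le zero_lt_one ht)
  have hkt : t ≤ k := Nat.le_ceil t
  have hbdd : BddAbove (Set.range fun j : {m : ℕ // 1 ≤ m} => opNorm2 (blockT j t)) := by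
    refine ⟨opNorm2 !![1, (t : ℂ); 0, 1], ?_⟩
    rintro y ⟨⟨j, hj⟩, rfl⟩
    show opNorm2 (blockT j t) ≤ _
    rw [aux_smul j hj t]
    have hexp : Real.exp (-t / j) ≤ 1 := by
      apply Real.exp_le_one_iff.mpr
      have hj0 : (0:ℝ) ≤ j := by positivity
      have := div_nonneg ht0 hj0
      rw [neg_div]; linarith
    have hN : 0 ≤ opNorm2 !![1, (t : ℂ); 0, 1] := norm_nonneg _
    nlinarith
  have key : Real.exp (-1) * t ≤ opNorm2 (blockT k t) := by
    have := h1 k hk1 t ht0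
    have hexp : Real.exp (-1) ≤ Real.exp (-t / k) := by
      apply Real.exp_le_exp.mpr
      have hkpos : (0:ℝ) < k := by exact_mod_cast hk1
      rw [neg_div, neg_le_neg_iff]
      rw [div_le_one hkpos]
      exact hkt
    nlinarith
  exact key.trans (le_ciSup hbdd ⟨k, hk1⟩)
end

section
/- In the same example, for each k ≥ 1 the block generator A_k = [[ik − 1/k, 1], [0, ik − 1/k]] satisfies: ‖e^{tA_k} A_k^{-1}‖ is uniformly bounded in k and t ≥ 0, i.e., there is M > 0 with ‖e^{tA_k} A_k^{-1}‖ ≤ M for all k ≥ 1, t ≥ 0. -/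
set_option maxHeartbeats 1000000
set_option synthInstance.maxHeartbeats 400000


open Complex

/-- The Jordan block generator `A_k = [[ik - 1/k, 1], [0, ik - 1/k]]`. -/
noncomputable def jordanA (k : ℕ) : Matrix (Fin 2) (Fin 2) ℂ :=
  !![(k : ℂ) * I - 1 / k, 1; 0, (k : ℂ) * I - 1 / k]

namespace JordanAux

/-- The nilpotent part. -/
def N : Matrix (Fin 2) (Fin 2) ℂ := !![0, 1; 0, 0]

lemma opNorm2_add_le (A B : Matrix (Fin 2) (Fin 2) ℂ) :
    opNorm2 (A + B) ≤ opNorm2 A + opNorm2 B := by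
  unfold opNorm2
  rw [map_add]
  exact norm_add_le _ _

lemma opNorm2_smul (c : ℂ) (A : Matrix (Fin 2) (Fin 2) ℂ) :
    opNorm2 (c • A) = ‖c‖ * opNorm2 A := by
  unfold opNorm2
  rw [map_smul]
  exact norm_smul c (Matrix.toEuclideanCLM (𝕜 := ℂ) A)

lemma exp_of_sq_eq_zero (x : Matrix (Fin 2) (Fin 2) ℂ) (h : x * x = 0) :
    NormedSpace.exp x = 1 + x := by
  rw [NormedSpace.exp_eq_tsum ℂ]
  have hz : ∀ n ∉ ({0, 1} : Finset ℕ), ((n.factorial : ℂ))⁻¹ • x ^ n = (0 : Matrix (Fin 2) (Fin 2) ℂ) := by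
    intro n hn
    simp only [Finset.mem_insert, Finset.mem_singleton] at hn
    obtain ⟨m, rfl⟩ : ∃ m, n = m + 2 := ⟨n - 2, by omega⟩
    rw [pow_add, pow_two, h, mul_zero, smul_zero]
  beta_reduce
  rw [tsum_eq_sum hz]
  norm_num [Finset.sum_pair]

lemma exp_smul_one (c : ℂ) :
    NormedSpace.exp (c • (1 : Matrix (Fin 2) (Fin 2) ℂ)) = Complex.exp c • 1 := by
  rw [Matrix.smul_one_eq_diagonal, Matrix.exp_diagonal, Pi.exp_def,
    ← Matrix.smul_one_eq_diagonal, Complex.exp_eq_exp_ℂ]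

end JordanAux

open JordanAux in
/-- `‖e^{tA_k} A_k⁻¹‖` is uniformly bounded over `k ≥ 1` and `t ≥ 0`. -/
theorem exp_jordanA_mul_inv_bounded :
    ∃ M : ℝ, 0 < M ∧ ∀ k : ℕ, 1 ≤ k → ∀ t : ℝ, 0 ≤ t →
      opNorm2 (NormedSpace.exp ((t : ℂ) • jordanA k) * (jordanA k)⁻¹) ≤ M := by
  have hop1 : 0 ≤ opNorm2 1 := by unfold opNorm2; positivity
  have hopN : 0 ≤ opNorm2 N := by unfold opNorm2; positivity
  refine ⟨opNorm2 1 + 2 * opNorm2 N + 1, by linarith, ?_⟩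
  intro k hk t ht
  set l : ℂ := (k : ℂ) * I - 1 / k with hl
  have hk0 : (0 : ℝ) < k := by exact_mod_cast hk
  have hk1 : (1 : ℝ) ≤ k := by exact_mod_cast hk
  have him : l.im = k := by simp [hl]
  have hre : l.re = -(1 / k) := by simp [hl]
  have hl0 : l ≠ 0 := by
    intro h
    rw [h, Complex.zero_im] at him
    exact hk0.ne' him.symm
  -- norm of l is at least k
  have hln : (k : ℝ) ≤ ‖l‖ := by
    calc (k : ℝ) = |l.im| := by rw [him]; exact (abs_of_pos hk0).symm
    _ ≤ ‖l‖ := Complex.abs_im_le_norm l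
  have hlpos : (0 : ℝ) < ‖l‖ := lt_of_lt_of_le hk0 hln
  -- the exponential factor
  set e : ℂ := Complex.exp ((t : ℂ) * l) with he
  have hE : ‖e‖ = Real.exp (-(t / k)) := by
    rw [he, Complex.norm_exp]
    congr 1
    simp [Complex.mul_re, hre, him]
    ring
  set E : ℝ := Real.exp (-(t / k)) with hEdef
  have hE1 : E ≤ 1 := Real.exp_le_one_iff.mpr (neg_nonpos.mpr (by positivity))
  have hE0 : (0 : ℝ) < E := Real.exp_pos _
  have hEt : t * E ≤ k := by
    have h1 : t / k ≤ Real.exp (t / k) := by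
      have := Real.add_one_le_exp (t / k)
      linarith [div_nonneg ht hk0.le]
    have h2 : (t / k) * E ≤ Real.exp (t / k) * E :=
      mul_le_mul_of_nonneg_right h1 hE0.le
    rw [← Real.exp_add] at h2
    simp at h2
    calc t * E = ((t / k) * E) * k := by field_simp
    _ ≤ 1 * k := by
        apply mul_le_mul_of_nonneg_right _ hk0.le
        exact h2
    _ = k := one_mul _
  -- exponential of the matrix
  have hA : jordanA k = l • (1 : Matrix (Fin 2) (Fin 2) ℂ) + N := by
    ext i j
    fin_cases i <;> fin_cases j <;> simp [jordanA, hl, N, Matrix.one_apply]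
  have hNN : ((t : ℂ) • N) * ((t : ℂ) • N) = 0 := by
    rw [Matrix.smul_mul, Matrix.mul_smul]
    have : N * N = 0 := by
      ext i j
      fin_cases i <;> fin_cases j <;> simp [N, Matrix.mul_apply, Fin.sum_univ_two]
    rw [this, smul_zero, smul_zero]
  have hexp : NormedSpace.exp ((t : ℂ) • jordanA k) = e • (1 + (t : ℂ) • N) := by
    rw [hA, smul_add, smul_smul]
    rw [Matrix.exp_add_of_commute _ _ (((Commute.one_left N).smul_left _).smul_right _)]
    rw [exp_smul_one, exp_of_sq_eq_zero _ hNN, ← he]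
    rw [smul_mul_assoc, one_mul]
  -- the inverse
  set B : Matrix (Fin 2) (Fin 2) ℂ := !![l⁻¹, -(l⁻¹ * l⁻¹); 0, l⁻¹] with hB
  have hInv : (jordanA k)⁻¹ = B := by
    apply Matrix.inv_eq_right_inv
    ext i j
    fin_cases i <;> fin_cases j <;>
      simp [jordanA, hB, Matrix.mul_apply, Fin.sum_univ_two, Matrix.one_apply, ← hl,
        mul_inv_cancel₀ hl0] <;>
      field_simp <;> rw [hl] <;> field_simp <;> ring
  -- the product
  set a : ℂ := e * l⁻¹ with ha
  set b : ℂ := e * ((t : ℂ) * l⁻¹ - l⁻¹ * l⁻¹) with hb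
  have hP : NormedSpace.exp ((t : ℂ) • jordanA k) * (jordanA k)⁻¹
      = a • (1 : Matrix (Fin 2) (Fin 2) ℂ) + b • N := by
    rw [hexp, hInv]
    ext i j
    fin_cases i <;> fin_cases j <;>
      simp [hB, N, Matrix.mul_apply, Fin.sum_univ_two, Matrix.one_apply, ha, hb,
        Matrix.smul_apply, Matrix.add_apply] <;>
      ring
  -- norm bounds on scalars
  have hinv : ‖l‖⁻¹ ≤ (k : ℝ)⁻¹ := by
    apply inv_anti₀ hk0 hln
  have hinv1 : ‖l‖⁻¹ ≤ 1 := le_trans hinv (by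
    rw [inv_le_one_iff₀]; right; exact hk1)
  have hnorma : ‖a‖ ≤ 1 := by
    rw [ha, norm_mul, norm_inv, hE]
    calc E * ‖l‖⁻¹ ≤ 1 * 1 := by
          apply mul_le_mul hE1 hinv1 (by positivity) (by norm_num)
    _ = 1 := by norm_num
  have hnormb : ‖b‖ ≤ 2 := by
    rw [hb, norm_mul, hE]
    have h1 : ‖(t : ℂ) * l⁻¹ - l⁻¹ * l⁻¹‖ ≤ t * ‖l‖⁻¹ + ‖l‖⁻¹ * ‖l‖⁻¹ := by
      calc ‖(t : ℂ) * l⁻¹ - l⁻¹ * l⁻¹‖ ≤ ‖(t : ℂ) * l⁻¹‖ + ‖l⁻¹ * l⁻¹‖ := norm_sub_le _ _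
      _ = t * ‖l‖⁻¹ + ‖l‖⁻¹ * ‖l‖⁻¹ := by
          rw [norm_mul, norm_mul, norm_inv, Complex.norm_real, Real.norm_eq_abs,
            _root_.abs_of_nonneg ht]
    have h2 : E * (t * ‖l‖⁻¹) ≤ 1 := by
      have : E * (t * ‖l‖⁻¹) ≤ E * (t * (k : ℝ)⁻¹) := by
        apply mul_le_mul_of_nonneg_left _ hE0.le
        exact mul_le_mul_of_nonneg_left hinv ht
      calc E * (t * ‖l‖⁻¹) ≤ E * (t * (k : ℝ)⁻¹) := this
      _ = (t * E) / k := by ring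
      _ ≤ 1 := (div_le_one hk0).mpr hEt
    have h3 : E * (‖l‖⁻¹ * ‖l‖⁻¹) ≤ 1 := by
      calc E * (‖l‖⁻¹ * ‖l‖⁻¹) ≤ 1 * (1 * 1) := by
            apply mul_le_mul hE1 (mul_le_mul hinv1 hinv1 (by positivity) (by norm_num))
              (by positivity) (by norm_num)
      _ = 1 := by norm_num
    calc E * ‖(t : ℂ) * l⁻¹ - l⁻¹ * l⁻¹‖ ≤ E * (t * ‖l‖⁻¹ + ‖l‖⁻¹ * ‖l‖⁻¹) :=
          mul_le_mul_of_nonneg_left h1 hE0.le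
    _ = E * (t * ‖l‖⁻¹) + E * (‖l‖⁻¹ * ‖l‖⁻¹) := by ring
    _ ≤ 1 + 1 := add_le_add h2 h3
    _ = 2 := by norm_num
  -- final bound
  rw [hP]
  calc opNorm2 (a • (1 : Matrix (Fin 2) (Fin 2) ℂ) + b • N)
      ≤ opNorm2 (a • (1 : Matrix (Fin 2) (Fin 2) ℂ)) + opNorm2 (b • N) :=
        opNorm2_add_le _ _
  _ = ‖a‖ * opNorm2 1 + ‖b‖ * opNorm2 N := by rw [opNorm2_smul, opNorm2_smul]
  _ ≤ 1 * opNorm2 1 + 2 * opNorm2 N := by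
      apply add_le_add
      · exact mul_le_mul_of_nonneg_right hnorma hop1
      · exact mul_le_mul_of_nonneg_right hnormb hopN
  _ ≤ opNorm2 1 + 2 * opNorm2 N + 1 := by linarith
end

section
/- Let λ_n = i log n for n ≥ 2 and consider the diagonal semigroup T(t)e_n = e^{it log n} e_n on ℓ² with the modified norm ‖x‖₁² = |c_2|² + ∑_{n≥2} |c_{n+1} − c_n|² for x = ∑ c_n e_n. Then there exists M₀ > 0 such that ‖T(t)A^{-1}x‖₁ ≤ M₀ (t/log t) ‖x‖₁ for all t > e and all x, where A^{-1}e_n = (1/(i log n)) e_n. -/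
open Complex

/-- The square of the modified norm `‖x‖₁² = |c₂|² + ∑_{n ≥ 2} |c_{n+1} - c_n|²` of a
sequence `(c_n)_{n ≥ 2}` (indices below `2` are ignored). -/
noncomputable def normOneSq (c : ℕ → ℂ) : ℝ :=
  ‖c 2‖ ^ 2 + ∑' n : ℕ, ‖c (n + 3) - c (n + 2)‖ ^ 2

/-- The coordinatewise action of `T(t)A⁻¹` on a sequence:
`(T(t)A⁻¹ x)_n = c_n e^{i t log n} / (i log n)`. -/
noncomputable def TAinv (t : ℝ) (c : ℕ → ℂ) : ℕ → ℂ :=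
  fun n => c n * Complex.exp (I * t * Real.log n) / (I * Real.log n)


section Aux
open Finset

lemma norm_expI (t L : ℝ) : ‖Complex.exp (I * t * L)‖ = 1 := by
  rw [Complex.norm_exp]
  norm_num [Complex.mul_re]

lemma norm_exp_sub_one_le_two (θ : ℝ) : ‖Complex.exp (I * θ) - 1‖ ≤ 2 := by
  have h : (I * (1:ℝ) * θ : ℂ) = I * θ := by push_cast; ring
  have h2 := norm_expI 1 θ
  rw [h] at h2
  calc ‖Complex.exp (I * θ) - 1‖ ≤ ‖Complex.exp (I * θ)‖ + ‖(1:ℂ)‖ := norm_sub_le _ _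
  _ ≤ 2 := by rw [h2]; norm_num

lemma norm_exp_sub_one_le_abs (θ : ℝ) : ‖Complex.exp (I * θ) - 1‖ ≤ |θ| := by
  have h1 : Complex.exp (I * θ) - 1 = Complex.mk (Real.cos θ - 1) (Real.sin θ) := by
    have : (I * θ : ℂ) = (θ:ℂ) * I := by ring
    rw [this]
    apply Complex.ext <;> simp [Complex.exp_ofReal_mul_I_re, Complex.exp_ofReal_mul_I_im]
  rw [h1]
  have h2 : ‖Complex.mk (Real.cos θ - 1) (Real.sin θ)‖ ^ 2 = 2 - 2 * Real.cos θ := by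
    rw [Complex.sq_norm]
    simp only [Complex.normSq_mk]
    nlinarith [Real.sin_sq_add_cos_sq θ]
  have h3 : 2 - 2 * Real.cos θ ≤ θ ^ 2 := by
    nlinarith [Real.one_sub_sq_div_two_le_cos (x := θ)]
  have h4 : ‖Complex.mk (Real.cos θ - 1) (Real.sin θ)‖ ^ 2 ≤ |θ| ^ 2 := by
    rw [h2, _root_.sq_abs]; linarith
  nlinarith [h4, norm_nonneg (Complex.mk (Real.cos θ - 1) (Real.sin θ)), abs_nonneg θ]

lemma hardy_key (a : ℕ → ℝ) (ha : ∀ n, 0 ≤ a n) (n : ℕ) :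
    ((∑ k ∈ range (n+1), a k) / (n+1)) ^ 2
      - 2 * a n * ((∑ k ∈ range (n+1), a k) / (n+1))
    ≤ (∑ k ∈ range n, a k) ^ 2 / n - (∑ k ∈ range (n+1), a k) ^ 2 / (n+1) := by
  rcases Nat.eq_zero_or_pos n with h0 | hpos
  · subst h0; simp [Finset.sum_range_one]; nlinarith [ha 0]
  · have hs : ∑ k ∈ range (n+1), a k = (∑ k ∈ range n, a k) + a n := Finset.sum_range_succ a n
    set s := ∑ k ∈ range n, a k with hsdef
    set ν := (n:ℝ) with hν
    have hν0 : (0:ℝ) < ν := by rw [hν]; exact_mod_cast hpos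
    have hν1 : (0:ℝ) < ν + 1 := by linarith
    rw [hs, ← sub_nonneg]
    have expand : s^2/ν - (s + a n)^2/(ν+1) - (((s + a n)/(ν+1))^2 - 2 * a n * ((s + a n)/(ν+1)))
        = (ν * (s + a n) - (ν+1) * s)^2 / (ν * (ν+1)^2) := by
      field_simp
      ring
    rw [expand]
    positivity

lemma hardy_finite (a : ℕ → ℝ) (ha : ∀ n, 0 ≤ a n) (N : ℕ) :
    ∑ n ∈ range N, ((∑ k ∈ range (n+1), a k) / (n+1)) ^ 2 ≤ 4 * ∑ n ∈ range N, (a n) ^ 2 := by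
  set A : ℕ → ℝ := fun n => (∑ k ∈ range (n+1), a k) / (n+1) with hA
  set B : ℕ → ℝ := fun n => (∑ k ∈ range n, a k) ^ 2 / n with hB
  have hApos : ∀ n, 0 ≤ A n := fun n => by
    apply div_nonneg (Finset.sum_nonneg fun i _ => ha i) (by positivity)
  have htel : ∑ n ∈ range N, (A n ^ 2 - 2 * a n * A n) ≤ 0 := by
    calc ∑ n ∈ range N, (A n ^ 2 - 2 * a n * A n)
        ≤ ∑ n ∈ range N, (B n - B (n+1)) :=
          Finset.sum_le_sum fun n _ => by
            simpa [hA, hB, Nat.cast_succ] using hardy_key a ha n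
      _ = B 0 - B N := Finset.sum_range_sub' B N
      _ ≤ 0 := by
          simp only [hB]
          simp
          positivity
  have h2 : ∑ n ∈ range N, 2 * a n * A n = 2 * ∑ n ∈ range N, a n * A n := by
    rw [Finset.mul_sum]; apply Finset.sum_congr rfl; intros; ring
  rw [Finset.sum_sub_distrib, h2] at htel
  have hCS := Finset.sum_mul_sq_le_sq_mul_sq (range N) a A
  have hP : 0 ≤ ∑ n ∈ range N, a n * A n :=
    Finset.sum_nonneg fun n _ => mul_nonneg (ha n) (hApos n)
  have hT : 0 ≤ ∑ n ∈ range N, A n ^ 2 := Finset.sum_nonneg fun n _ => sq_nonneg _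
  have hQ : 0 ≤ ∑ n ∈ range N, a n ^ 2 := Finset.sum_nonneg fun n _ => sq_nonneg _
  nlinarith [hCS, hP, hT, hQ, htel]

set_option maxHeartbeats 2000000 in
lemma key_pointwise (t : ℝ) (ht : Real.exp 1 < t) (c : ℕ → ℂ) (n : ℕ) :
    ‖TAinv t c (n+3) - TAinv t c (n+2)‖ ≤
      ‖c (n+3) - c (n+2)‖ / Real.log 2
        + (4 * (t / Real.log t) / ((n:ℝ)+2)) * ‖c (n+2)‖ := by
  have he3 : Real.exp 1 ≤ 3 := by linarith [Real.exp_one_lt_d9]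
  have ht0 : (0:ℝ) < t := lt_trans (Real.exp_pos 1) ht
  have hlogt : 1 < Real.log t := (Real.lt_log_iff_exp_lt ht0).mpr ht
  set ρ := t / Real.log t with hρdef
  clear_value ρ
  have hρ1 : 1 ≤ ρ := by
    rw [hρdef, le_div_iff₀ (by linarith)]
    have := Real.log_le_sub_one_of_pos ht0
    linarith
  set m := (n:ℝ) + 2 with hm
  clear_value m
  have hm2 : (2:ℝ) ≤ m := by rw [hm]; linarith [Nat.cast_nonneg (α := ℝ) n]
  have hm0 : (0:ℝ) < m := by linarith
  have hm10 : (0:ℝ) < m + 1 := by linarith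
  set L₂ := Real.log m with hL₂
  clear_value L₂
  set L₃ := Real.log (m+1) with hL₃
  clear_value L₃
  have hlog2 : (0:ℝ) < Real.log 2 := Real.log_pos (by norm_num)
  have hlog2half : (1:ℝ)/2 ≤ Real.log 2 := by linarith [Real.log_two_gt_d9]
  have hL2 : Real.log 2 ≤ L₂ := by rw [hL₂]; exact Real.log_le_log (by norm_num) hm2
  have hL3 : (1:ℝ) ≤ L₃ := by
    rw [hL₃, Real.le_log_iff_exp_le hm10]
    linarith
  have hL23 : L₂ ≤ L₃ := by rw [hL₂, hL₃]; exact Real.log_le_log hm0 (by linarith)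
  have hL20 : (0:ℝ) < L₂ := lt_of_lt_of_le hlog2 hL2
  have hL30 : (0:ℝ) < L₃ := by linarith
  set δ := L₃ - L₂ with hδdef
  clear_value δ
  have hδ0 : 0 ≤ δ := by simp only [hδdef]; linarith
  have hδm : δ ≤ 1/m := by
    have h1 : δ = Real.log ((m+1)/m) := by
      rw [hδdef, hL₂, hL₃, Real.log_div (by linarith) (by linarith)]
    have h2 := Real.log_le_sub_one_of_pos (x := (m+1)/m) (by positivity)
    have h3 : (m+1)/m - 1 = 1/m := by field_simp; ring
    rw [h1]
    linarith [h3 ▸ h2]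
  set E₂ := Complex.exp (I * t * (L₂:ℝ)) with hE₂
  clear_value E₂
  set E₃ := Complex.exp (I * t * (L₃:ℝ)) with hE₃
  clear_value E₃
  have hnE₂ : ‖E₂‖ = 1 := by rw [hE₂]; exact norm_expI t L₂
  have hnE₃ : ‖E₃‖ = 1 := by rw [hE₃]; exact norm_expI t L₃
  have hL2ne : ((L₂:ℂ)) ≠ 0 := by exact_mod_cast hL20.ne'
  have hL3ne : ((L₃:ℂ)) ≠ 0 := by exact_mod_cast hL30.ne'
  have hcast3 : ((n+3:ℕ):ℝ) = m + 1 := by rw [hm]; push_cast; ring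
  have hcast2 : ((n+2:ℕ):ℝ) = m := by rw [hm]; push_cast; ring
  have hsplit : TAinv t c (n+3) - TAinv t c (n+2)
      = (c (n+3) - c (n+2)) * E₃ / (I * (L₃:ℂ))
        + c (n+2) * (E₃ / (I * (L₃:ℂ)) - E₂ / (I * (L₂:ℂ))) := by
    simp only [TAinv, hcast3, hcast2, hE₂, hE₃, hL₂, hL₃]
    ring
  rw [hsplit]
  refine (norm_add_le _ _).trans ?_
  have hnormIL : ∀ L : ℝ, 0 < L → ‖(I * (L:ℂ))‖ = L := fun L hL => by
    rw [norm_mul, Complex.norm_I, one_mul, Complex.norm_real, Real.norm_eq_abs,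
      abs_of_pos hL]
  have hfirst : ‖(c (n+3) - c (n+2)) * E₃ / (I * (L₃:ℂ))‖
      ≤ ‖c (n+3) - c (n+2)‖ / Real.log 2 := by
    rw [norm_div, norm_mul, hnE₃, mul_one, hnormIL L₃ hL30]
    exact div_le_div_of_nonneg_left (norm_nonneg _) hlog2 (le_trans hL2 hL23)
  have hEdiff : ‖E₃ - E₂‖ ≤ min 2 (t * δ) := by
    have hsum : I * (t:ℂ) * (L₃:ℂ) = I * (t:ℂ) * (L₂:ℂ) + I * ((t * δ : ℝ):ℂ) := by
      simp only [hδdef]; push_cast; ring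
    have hfac : E₃ - E₂ = E₂ * (Complex.exp (I * ((t*δ:ℝ):ℂ)) - 1) := by
      rw [hE₃, hE₂, hsum, Complex.exp_add]; ring
    rw [hfac, norm_mul, hnE₂, one_mul]
    refine le_min (norm_exp_sub_one_le_two _) ?_
    have h := norm_exp_sub_one_le_abs (t*δ)
    rwa [_root_.abs_of_nonneg (by positivity : (0:ℝ) ≤ t*δ)] at h
  have hgid : E₃ / (I * (L₃:ℂ)) - E₂ / (I * (L₂:ℂ))
      = (E₃ - E₂) / (I * (L₃:ℂ)) + E₂ * (((L₂ - L₃ : ℝ):ℂ) / (I * (L₃:ℂ) * (L₂:ℂ))) := by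
    field_simp
    push_cast; ring
  have hg : ‖E₃ / (I * (L₃:ℂ)) - E₂ / (I * (L₂:ℂ))‖
      ≤ min 2 (t * δ) / L₃ + δ / (L₃ * L₂) := by
    rw [hgid]
    refine (norm_add_le _ _).trans (add_le_add ?_ ?_)
    · rw [norm_div, hnormIL L₃ hL30]
      exact (div_le_div_iff_of_pos_right hL30).mpr hEdiff
    · rw [norm_mul, hnE₂, one_mul, norm_div, norm_mul, hnormIL L₃ hL30,
        Complex.norm_real, Complex.norm_real, Real.norm_eq_abs, Real.norm_eq_abs,
        abs_of_pos hL20, abs_of_nonpos (by linarith : L₂ - L₃ ≤ 0)]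
      simp only [hδdef]
      exact le_of_eq (by ring_nf)
  have hterm2 : δ / (L₃ * L₂) ≤ 2 * ρ / m := by
    have h1 : δ / (L₃ * L₂) ≤ (1/m) / (1/2) :=
      div_le_div₀ (by positivity) hδm (by norm_num) (by nlinarith)
    have h2 : (1/m) / ((1:ℝ)/2) = 2 / m := by
      rw [div_div_eq_mul_div]
      ring
    have h3 : (2:ℝ) / m ≤ 2 * ρ / m := (div_le_div_iff_of_pos_right hm0).mpr (by linarith)
    linarith [h1, h2 ▸ h1]
  have hlt0 : (0:ℝ) < Real.log t := by linarith
  have hρpos : (0:ℝ) < ρ := by rw [hρdef]; exact div_pos ht0 hlt0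
  have hcanc : ρ * Real.log t = t := by rw [hρdef]; exact div_mul_cancel₀ t hlt0.ne'
  have hterm1 : min 2 (t * δ) / L₃ ≤ 2 * ρ / m := by
    rcases le_or_gt t m with htm | hmt
    · have hLt : Real.log t ≤ L₃ := by rw [hL₃]; exact Real.log_le_log ht0 (by linarith)
      have hup : t ≤ ρ * L₃ := by nlinarith [mul_le_mul_of_nonneg_left hLt hρpos.le]
      have h1 : min 2 (t*δ) / L₃ ≤ (t/m) / L₃ := by
        apply (div_le_div_iff_of_pos_right hL30).mpr
        refine le_trans (min_le_right _ _) ?_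
        rw [div_eq_mul_one_div]
        exact mul_le_mul_of_nonneg_left hδm ht0.le
      have h2 : (t/m) / L₃ ≤ 2 * ρ / m := by
        rw [div_div, div_le_div_iff₀ (mul_pos hm0 hL30) hm0]
        nlinarith [hup]
      linarith
    · have key : m ≤ ρ * L₃ := by
        have hkey' : m * Real.log t ≤ t * L₃ := by
          rcases le_or_gt t (m+1) with h1 | h1
          · have hLt : Real.log t ≤ L₃ := by rw [hL₃]; exact Real.log_le_log ht0 h1
            nlinarith
          · have hanti := Real.log_div_self_antitoneOn
              (Set.mem_setOf.mpr (by linarith : Real.exp 1 ≤ m+1))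
              (Set.mem_setOf.mpr ht.le) h1.le
            simp only at hanti
            rw [div_le_div_iff₀ ht0 hm10] at hanti
            nlinarith [hanti]
        calc m = (m * Real.log t) / Real.log t := by field_simp
          _ ≤ (t * L₃) / Real.log t := (div_le_div_iff_of_pos_right hlt0).mpr hkey'
          _ = ρ * L₃ := by rw [hρdef]; ring
      calc min 2 (t*δ) / L₃ ≤ 2 / L₃ := (div_le_div_iff_of_pos_right hL30).mpr (min_le_left _ _)
        _ ≤ 2 * ρ / m := by
            rw [div_le_div_iff₀ hL30 hm0]
            nlinarith [key]
  calc ‖(c (n+3) - c (n+2)) * E₃ / (I * (L₃:ℂ))‖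
        + ‖c (n+2) * (E₃ / (I * (L₃:ℂ)) - E₂ / (I * (L₂:ℂ)))‖
      ≤ ‖c (n+3) - c (n+2)‖ / Real.log 2 + ‖c (n+2)‖ * (4 * ρ / m) := by
        refine add_le_add hfirst ?_
        rw [norm_mul]
        refine mul_le_mul_of_nonneg_left (hg.trans ?_) (norm_nonneg _)
        have : 2 * ρ / m + 2 * ρ / m = 4 * ρ / m := by ring
        linarith [hterm1, hterm2]
    _ = ‖c (n+3) - c (n+2)‖ / Real.log 2 + (4 * ρ / m) * ‖c (n+2)‖ := by ring

lemma sum_inv_sq_le (N : ℕ) : ∑ n ∈ range N, (1/((n:ℝ)+2))^2 ≤ 1 := by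
  have h1 : ∀ n : ℕ, (1/((n:ℝ)+2))^2 ≤ 1/((n:ℝ)+1) - 1/((n:ℝ)+2) := by
    intro n
    have hn0 : (0:ℝ) < (n:ℝ)+1 := by positivity
    have hn2 : (0:ℝ) < (n:ℝ)+2 := by positivity
    rw [div_sub_div _ _ hn0.ne' hn2.ne', div_pow, one_pow]
    rw [div_le_div_iff₀ (by positivity) (by positivity)]
    ring_nf
    nlinarith [Nat.cast_nonneg (α := ℝ) n]
  calc ∑ n ∈ range N, (1/((n:ℝ)+2))^2
      ≤ ∑ n ∈ range N, ((fun k : ℕ => 1/((k:ℝ)+1)) n - (fun k : ℕ => 1/((k:ℝ)+1)) (n+1)) := by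
        refine Finset.sum_le_sum fun n _ => ?_
        have := h1 n
        push_cast
        ring_nf at this ⊢
        linarith
    _ = (fun k : ℕ => 1/((k:ℝ)+1)) 0 - (fun k : ℕ => 1/((k:ℝ)+1)) N :=
        Finset.sum_range_sub' (fun k : ℕ => 1/((k:ℝ)+1)) N
    _ ≤ 1 := by
        have hpos : (0:ℝ) ≤ 1/((N:ℝ)+1) := by positivity
        simp only
        norm_num
        linarith

lemma hardy_c (c : ℕ → ℂ) (hsum : Summable (fun n : ℕ => ‖c (n + 3) - c (n + 2)‖ ^ 2))
    (N : ℕ) :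
    ∑ n ∈ range N, (‖c (n+2)‖ / ((n:ℝ)+2))^2 ≤ 8 * normOneSq c := by
  set a : ℕ → ℝ := fun k => ‖c (k+3) - c (k+2)‖ with ha_def
  have ha : ∀ k, 0 ≤ a k := fun k => norm_nonneg _
  have hc : ∀ n : ℕ, ‖c (n+2)‖ ≤ ‖c 2‖ + ∑ k ∈ range n, a k := by
    intro n
    have htel : ∑ k ∈ range n, (c (k+3) - c (k+2)) = c (n+2) - c 2 := by
      have := Finset.sum_range_sub (fun i => c (i+2)) n
      simpa using this
    have : c (n+2) = c 2 + ∑ k ∈ range n, (c (k+3) - c (k+2)) := by rw [htel]; ring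
    rw [this]
    refine (norm_add_le _ _).trans (add_le_add (le_refl _) ?_)
    exact (norm_sum_le _ _).trans (le_of_eq rfl)
  have hpt : ∀ n : ℕ, (‖c (n+2)‖ / ((n:ℝ)+2))^2
      ≤ 2 * ‖c 2‖^2 * (1/((n:ℝ)+2))^2 + 2 * ((∑ k ∈ range (n+1), a k) / ((n:ℝ)+1))^2 := by
    intro n
    have hn1 : (0:ℝ) < (n:ℝ)+1 := by positivity
    have hn2 : (0:ℝ) < (n:ℝ)+2 := by positivity
    have hS : (0:ℝ) ≤ ∑ k ∈ range n, a k := Finset.sum_nonneg fun k _ => ha k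
    have hSS : ∑ k ∈ range n, a k ≤ ∑ k ∈ range (n+1), a k := by
      rw [Finset.sum_range_succ]; linarith [ha n]
    have h1 : ‖c (n+2)‖ / ((n:ℝ)+2) ≤ ‖c 2‖/((n:ℝ)+2) + (∑ k ∈ range (n+1), a k)/((n:ℝ)+1) := by
      have h2 : (∑ k ∈ range n, a k)/((n:ℝ)+2) ≤ (∑ k ∈ range (n+1), a k)/((n:ℝ)+1) :=
        div_le_div₀ (le_trans hS hSS) hSS hn1 (by linarith)
      calc ‖c (n+2)‖ / ((n:ℝ)+2) ≤ (‖c 2‖ + ∑ k ∈ range n, a k)/((n:ℝ)+2) :=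
            (div_le_div_iff_of_pos_right hn2).mpr (hc n)
        _ = ‖c 2‖/((n:ℝ)+2) + (∑ k ∈ range n, a k)/((n:ℝ)+2) := by ring
        _ ≤ ‖c 2‖/((n:ℝ)+2) + (∑ k ∈ range (n+1), a k)/((n:ℝ)+1) := by linarith
    have hq0 : (0:ℝ) ≤ ‖c (n+2)‖ / ((n:ℝ)+2) := by positivity
    have hrw : 2 * ‖c 2‖^2 * (1/((n:ℝ)+2))^2 = 2 * (‖c 2‖/((n:ℝ)+2))^2 := by ring
    rw [hrw]
    nlinarith [sq_nonneg (‖c 2‖/((n:ℝ)+2) - (∑ k ∈ range (n+1), a k)/((n:ℝ)+1)), h1, hq0,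
      mul_self_nonneg (‖c 2‖/((n:ℝ)+2) + (∑ k ∈ range (n+1), a k)/((n:ℝ)+1) + ‖c (n+2)‖/((n:ℝ)+2))]
  calc ∑ n ∈ range N, (‖c (n+2)‖ / ((n:ℝ)+2))^2
      ≤ ∑ n ∈ range N, (2 * ‖c 2‖^2 * (1/((n:ℝ)+2))^2
          + 2 * ((∑ k ∈ range (n+1), a k) / ((n:ℝ)+1))^2) :=
        Finset.sum_le_sum fun n _ => hpt n
    _ = 2 * ‖c 2‖^2 * (∑ n ∈ range N, (1/((n:ℝ)+2))^2)
          + 2 * ∑ n ∈ range N, ((∑ k ∈ range (n+1), a k) / ((n:ℝ)+1))^2 := by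
        rw [Finset.sum_add_distrib, Finset.mul_sum, Finset.mul_sum]
    _ ≤ 2 * ‖c 2‖^2 * 1 + 2 * (4 * ∑ n ∈ range N, (a n)^2) := by
        refine add_le_add ?_ ?_
        · exact mul_le_mul_of_nonneg_left (sum_inv_sq_le N) (by positivity)
        · refine mul_le_mul_of_nonneg_left ?_ (by norm_num)
          have := hardy_finite a ha N
          convert this using 2
    _ ≤ 8 * normOneSq c := by
        have h8 : ∑ n ∈ range N, (a n)^2 ≤ ∑' n, (a n)^2 :=
          Summable.sum_le_tsum (range N) (fun i _ => sq_nonneg _) hsum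
        have : normOneSq c = ‖c 2‖^2 + ∑' n, (a n)^2 := rfl
        rw [this]
        nlinarith [h8, sq_nonneg (‖c 2‖), (tsum_nonneg (fun n => sq_nonneg (a n)) : 0 ≤ ∑' n, (a n)^2)]

end Aux

/-- Upper bound: there is `M₀ > 0` with `‖T(t)A⁻¹ x‖₁ ≤ M₀ (t / log t) ‖x‖₁` for all
`t > e` and all `x` of finite `‖·‖₁`-norm. -/
theorem TAinv_norm_upper :
    ∃ M₀ : ℝ, 0 < M₀ ∧ ∀ t : ℝ, Real.exp 1 < t → ∀ c : ℕ → ℂ,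
      Summable (fun n : ℕ => ‖c (n + 3) - c (n + 2)‖ ^ 2) →
      Real.sqrt (normOneSq (TAinv t c)) ≤
        M₀ * (t / Real.log t) * Real.sqrt (normOneSq c) := by
  refine ⟨20, by norm_num, fun t ht c hsum => ?_⟩
  have ht0 : (0:ℝ) < t := lt_trans (Real.exp_pos 1) ht
  have hlogt : 1 < Real.log t := (Real.lt_log_iff_exp_lt ht0).mpr ht
  set ρ := t / Real.log t with hρdef
  clear_value ρ
  have hρ1 : 1 ≤ ρ := by
    rw [hρdef, le_div_iff₀ (by linarith)]
    have := Real.log_le_sub_one_of_pos ht0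
    linarith
  have hρ0 : 0 < ρ := by linarith
  set N := normOneSq c with hN
  clear_value N
  have htsum0 : 0 ≤ ∑' n : ℕ, ‖c (n + 3) - c (n + 2)‖ ^ 2 :=
    tsum_nonneg fun n => sq_nonneg _
  have hN0 : 0 ≤ N := by rw [hN, normOneSq]; positivity
  have hc2N : ‖c 2‖^2 ≤ N := by rw [hN, normOneSq]; linarith
  have haN : ∑' n : ℕ, ‖c (n + 3) - c (n + 2)‖ ^ 2 ≤ N := by
    rw [hN, normOneSq]; nlinarith [sq_nonneg ‖c 2‖]
  have hlog2 : (0:ℝ) < Real.log 2 := Real.log_pos (by norm_num)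
  have hlog2half : (1:ℝ)/2 ≤ Real.log 2 := by linarith [Real.log_two_gt_d9]
  -- the Hardy-type sum
  have hHsummable : Summable (fun n : ℕ => (‖c (n+2)‖ / ((n:ℝ)+2))^2) :=
    summable_of_sum_range_le (fun n => by positivity) (fun n => hardy_c c hsum n)
  have hHtsum : ∑' n : ℕ, (‖c (n+2)‖ / ((n:ℝ)+2))^2 ≤ 8 * N := by
    rw [hN]
    exact Real.tsum_le_of_sum_range_le (fun n => by positivity) (hardy_c c hsum)
  -- bound on ‖d 2‖
  have hd2 : ‖TAinv t c 2‖^2 ≤ N / (Real.log 2)^2 := by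
    have h2 : ((2:ℕ):ℝ) = 2 := by norm_num
    have : ‖TAinv t c 2‖ = ‖c 2‖ / Real.log 2 := by
      rw [TAinv]
      rw [norm_div, norm_mul, h2, norm_expI, mul_one, norm_mul, Complex.norm_I, one_mul,
        Complex.norm_real, Real.norm_eq_abs, abs_of_pos hlog2]
    rw [this, div_pow]
    exact (div_le_div_iff_of_pos_right (by positivity : (0:ℝ) < (Real.log 2)^2)).mpr hc2N
  -- pointwise squared bound
  have hw : ∀ n : ℕ, ‖TAinv t c (n+3) - TAinv t c (n+2)‖^2
      ≤ 2/(Real.log 2)^2 * ‖c (n+3) - c (n+2)‖^2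
        + 32 * ρ^2 * (‖c (n+2)‖ / ((n:ℝ)+2))^2 := by
    intro n
    have hkey := key_pointwise t ht c n
    rw [← hρdef] at hkey
    have hn2 : (0:ℝ) < (n:ℝ)+2 := by positivity
    have hu0 : 0 ≤ ‖c (n+3) - c (n+2)‖ / Real.log 2 := by positivity
    have hv0 : 0 ≤ (4 * ρ / ((n:ℝ)+2)) * ‖c (n+2)‖ := by positivity
    have hG0 : 0 ≤ ‖TAinv t c (n+3) - TAinv t c (n+2)‖ := norm_nonneg _
    have hrw1 : 2/(Real.log 2)^2 * ‖c (n+3) - c (n+2)‖^2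
        = 2 * (‖c (n+3) - c (n+2)‖ / Real.log 2)^2 := by
      field_simp
    have hrw2 : 32 * ρ^2 * (‖c (n+2)‖ / ((n:ℝ)+2))^2
        = 2 * ((4 * ρ / ((n:ℝ)+2)) * ‖c (n+2)‖)^2 := by
      field_simp
      ring
    rw [hrw1, hrw2]
    nlinarith [sq_nonneg (‖c (n+3) - c (n+2)‖ / Real.log 2 - (4 * ρ / ((n:ℝ)+2)) * ‖c (n+2)‖),
      hkey, hG0, hu0, hv0]
  -- summability of the majorant
  have hwsummable : Summable (fun n : ℕ => 2/(Real.log 2)^2 * ‖c (n+3) - c (n+2)‖^2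
      + 32 * ρ^2 * (‖c (n+2)‖ / ((n:ℝ)+2))^2) :=
    (hsum.mul_left _).add (hHsummable.mul_left _)
  have hGsummable : Summable (fun n : ℕ => ‖TAinv t c (n+3) - TAinv t c (n+2)‖^2) :=
    Summable.of_nonneg_of_le (fun n => sq_nonneg _) hw hwsummable
  have hGtsum : ∑' n : ℕ, ‖TAinv t c (n+3) - TAinv t c (n+2)‖^2
      ≤ 2/(Real.log 2)^2 * N + 32 * ρ^2 * (8 * N) := by
    calc ∑' n : ℕ, ‖TAinv t c (n+3) - TAinv t c (n+2)‖^2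
        ≤ ∑' n : ℕ, (2/(Real.log 2)^2 * ‖c (n+3) - c (n+2)‖^2
            + 32 * ρ^2 * (‖c (n+2)‖ / ((n:ℝ)+2))^2) :=
          Summable.tsum_le_tsum hw hGsummable hwsummable
      _ = 2/(Real.log 2)^2 * (∑' n : ℕ, ‖c (n+3) - c (n+2)‖^2)
            + 32 * ρ^2 * (∑' n : ℕ, (‖c (n+2)‖ / ((n:ℝ)+2))^2) := by
          rw [Summable.tsum_add (hsum.mul_left _) (hHsummable.mul_left _), tsum_mul_left, tsum_mul_left]
      _ ≤ 2/(Real.log 2)^2 * N + 32 * ρ^2 * (8 * N) := by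
          refine add_le_add (mul_le_mul_of_nonneg_left haN (by positivity)) ?_
          exact mul_le_mul_of_nonneg_left hHtsum (by positivity)
  -- total bound
  have h1 : normOneSq (TAinv t c) = ‖TAinv t c 2‖^2
      + ∑' n : ℕ, ‖TAinv t c (n+3) - TAinv t c (n+2)‖^2 := rfl
  set D2 := ‖TAinv t c 2‖^2 with hD2def
  clear_value D2
  set G2 := ∑' n : ℕ, ‖TAinv t c (n+3) - TAinv t c (n+2)‖^2 with hG2def
  clear_value G2
  have htotal : normOneSq (TAinv t c) ≤ 400 * ρ^2 * N := by
    rw [h1]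
    clear hD2def hG2def h1 hw hwsummable hGsummable hHsummable hHtsum hsum hc2N haN hN ht hρdef
    have hlogsq : (1:ℝ)/4 ≤ (Real.log 2)^2 := by nlinarith
    have h3 : N / (Real.log 2)^2 ≤ 4 * N := by
      rw [div_le_iff₀ (by positivity)]
      nlinarith
    have h4 : 2/(Real.log 2)^2 * N ≤ 8 * N := by
      rw [div_mul_eq_mul_div, div_le_iff₀ (by positivity)]
      nlinarith
    have hρsq : 1 ≤ ρ^2 := by nlinarith
    nlinarith [hd2, hGtsum, hN0, hρsq, mul_nonneg hN0 (by linarith : (0:ℝ) ≤ ρ^2 - 1)]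
  -- conclude
  have hsqrt : Real.sqrt (normOneSq (TAinv t c)) ≤ Real.sqrt (400 * ρ^2 * N) :=
    Real.sqrt_le_sqrt htotal
  refine hsqrt.trans ?_
  have : (400 : ℝ) * ρ^2 * N = (20 * ρ)^2 * N := by ring
  rw [this, Real.sqrt_mul (by positivity), Real.sqrt_sq (by positivity)]
end

section
/- With the same setup (λ_n = i log n, modified norm ‖·‖₁), there exists m₀ > 0 such that ‖T(t)A^{-1}‖ ≥ m₀ t/log t for all t > e. A witness is the sequence x^{(t)} with c_n^{(t)} = n for n ≤ 2t, c_n^{(t)} = 4t − n for 2t < n ≤ 4t, and 0 otherwise, which satisfies ‖x^{(t)}‖₁² ≤ 4t and ∑_{n≥2} |c^{(t)}_{n+1} (e^{it log n} − e^{it log(n+1)})/log(n+1)|² ≥ m₁² (t/log t)² · 4t for suitable m₁ > 0. -/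
open Complex

lemma sin_half_bound {φ : ℝ} (h1 : 1/2 ≤ φ) (h2 : φ ≤ 1) : (15:ℝ)/32 ≤ Real.sin φ := by
  have hmono := Real.strictMonoOn_sin.monotoneOn
  have hmem1 : (1:ℝ)/2 ∈ Set.Icc (-(Real.pi/2)) (Real.pi/2) := by
    constructor <;> nlinarith [Real.pi_gt_three]
  have hmem2 : φ ∈ Set.Icc (-(Real.pi/2)) (Real.pi/2) := by
    constructor <;> nlinarith [Real.pi_gt_three]
  have h3 : Real.sin (1/2) ≤ Real.sin φ := hmono hmem1 hmem2 h1
  have h4 := Real.sin_gt_sub_cube (by norm_num : (0:ℝ) < 1/2)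
  nlinarith

set_option maxHeartbeats 800000 in
lemma key_term (t : ℝ) (m : ℕ) (ht : Real.exp 1 < t) (htm : t ≤ (m : ℝ))
    (hm2 : (m : ℝ) + 1 ≤ 2 * t) :
    t / (8 * Real.log t) ≤
      ‖((m + 1 : ℕ) : ℂ) * Complex.exp (I * t * Real.log (m + 1 : ℕ)) /
          (I * Real.log (m + 1 : ℕ)) -
        (m : ℂ) * Complex.exp (I * t * Real.log m) / (I * Real.log m)‖ := by
  have ht0 : (0:ℝ) < t := (Real.exp_pos 1).trans ht
  have hm3 : (3:ℕ) ≤ m := by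
    have h2 : (2:ℝ) < (m:ℝ) := by nlinarith [Real.exp_one_gt_d9]
    exact_mod_cast h2
  have hm0 : (0:ℝ) < (m:ℝ) := by positivity
  set L : ℝ := Real.log m with hLdef
  set L' : ℝ := Real.log ((m:ℝ) + 1) with hL'def
  have hlogcast : Real.log ((m + 1 : ℕ) : ℝ) = L' := by push_cast; rfl
  have hL1 : 1 < L := by
    rw [hLdef, show (1:ℝ) = Real.log (Real.exp 1) from (Real.log_exp 1).symm]
    exact Real.log_lt_log (Real.exp_pos 1) (ht.trans_le htm)
  have hLL' : L < L' := Real.log_lt_log hm0 (by linarith)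
  have hL0 : (0:ℝ) < L := by linarith
  have hL'0 : (0:ℝ) < L' := by linarith
  have hdiv : L' - L = Real.log (((m:ℝ) + 1) / m) := by
    rw [Real.log_div (by positivity) (by positivity)]
  have hsub_le : L' - L ≤ 1 / m := by
    rw [hdiv]
    have := Real.log_le_sub_one_of_pos (x := ((m:ℝ) + 1) / m) (by positivity)
    have heq : ((m:ℝ) + 1) / m - 1 = 1 / m := by field_simp; ring
    linarith
  have hsub_ge : 1 / ((m:ℝ) + 1) ≤ L' - L := by
    rw [hdiv]
    have := Real.log_le_sub_one_of_pos (x := (m:ℝ) / ((m:ℝ) + 1)) (by positivity)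
    have hlog : Real.log ((m:ℝ) / ((m:ℝ)+1)) = - Real.log (((m:ℝ)+1)/m) := by
      rw [← Real.log_inv]; congr 1; field_simp
    rw [hlog] at this
    have heq : (m:ℝ) / ((m:ℝ)+1) - 1 = - (1 / ((m:ℝ)+1)) := by field_simp; ring
    linarith
  set φ : ℝ := t * (L' - L) with hφdef
  have hφ1 : 1/2 ≤ φ := by
    have h0 : t * (1 / ((m:ℝ)+1)) ≤ φ := mul_le_mul_of_nonneg_left hsub_ge ht0.le
    have h' : (1:ℝ)/2 ≤ t * (1/((m:ℝ)+1)) := by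
      rw [mul_one_div, le_div_iff₀ (by positivity)]
      linarith
    linarith
  have hφ2 : φ ≤ 1 := by
    have h0 : φ ≤ t * (1 / m) := mul_le_mul_of_nonneg_left hsub_le ht0.le
    have h' : t * (1/(m:ℝ)) ≤ 1 := by
      rw [mul_one_div, div_le_one hm0]; exact htm
    linarith
  have hsin : (15:ℝ)/32 ≤ Real.sin φ := sin_half_bound hφ1 hφ2
  set E : ℂ := Complex.exp (I * t * (L:ℂ)) with hE
  set E' : ℂ := Complex.exp (I * t * (L':ℂ)) with hE'
  have hInz : (I : ℂ) ≠ 0 := I_ne_zero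
  have hLnz : ((L:ℂ)) ≠ 0 := by exact_mod_cast hL0.ne'
  have hL'nz : ((L':ℂ)) ≠ 0 := by exact_mod_cast hL'0.ne'
  have hEnorm : ‖E‖ = 1 := by
    rw [hE, show I * (t:ℂ) * (L:ℂ) = ((t*L : ℝ):ℂ) * I by push_cast; ring,
      Complex.norm_exp_ofReal_mul_I]
  have hnormE'E : Real.sin φ ≤ ‖E' - E‖ := by
    have hmulE : E * Complex.exp (((φ:ℝ):ℂ) * I) = E' := by
      rw [hE, hE', ← Complex.exp_add]
      congr 1
      rw [hφdef]
      push_cast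
      ring
    have hfact : E' - E = E * (Complex.exp (((φ:ℝ):ℂ) * I) - 1) := by
      rw [mul_sub, mul_one, hmulE]
    rw [hfact, norm_mul, hEnorm, one_mul]
    have him : (Complex.exp (((φ:ℝ):ℂ) * I) - 1).im = Real.sin φ := by
      simp [Complex.exp_ofReal_mul_I_im]
    calc Real.sin φ ≤ |(Complex.exp (((φ:ℝ):ℂ) * I) - 1).im| := by
          rw [him]; exact le_abs_self _
      _ ≤ ‖Complex.exp (((φ:ℝ):ℂ) * I) - 1‖ := by
          exact Complex.abs_im_le_norm _
  have hdecomp : ((m + 1 : ℕ) : ℂ) * E' / (I * (L':ℂ)) - (m : ℂ) * E / (I * (L:ℂ)) =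
      (((m:ℂ) + 1) * (E' - E) / (I * (L':ℂ))) +
      (E * (((m:ℂ) + 1) / (I * (L':ℂ)) - (m:ℂ) / (I * (L:ℂ)))) := by
    push_cast
    field_simp
    ring
  have hs_eq : ((m:ℂ) + 1) / (I * (L':ℂ)) - (m:ℂ) / (I * (L:ℂ)) =
      -I * ((((m:ℝ) + 1) / L' - (m:ℝ) / L : ℝ) : ℂ) := by
    push_cast
    field_simp
    ring_nf
    rw [Complex.I_sq]
    ring
  have hratio : |((m:ℝ) + 1) / L' - (m:ℝ) / L| ≤ 1 / L' := by
    have hml : (m:ℝ) * (L' - L) ≤ 1 := by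
      calc (m:ℝ) * (L' - L) ≤ (m:ℝ) * (1/m) := mul_le_mul_of_nonneg_left hsub_le hm0.le
        _ = 1 := by field_simp
    have hml0 : 0 ≤ (m:ℝ) * (L' - L) := mul_nonneg hm0.le (by linarith)
    have he1 : ((m:ℝ) + 1) / L' - (m:ℝ) / L = (L - (m:ℝ) * (L' - L)) / (L * L') := by
      field_simp
      ring
    rw [he1, abs_div, _root_.abs_of_nonneg (by linarith : (0:ℝ) ≤ L - (m:ℝ)*(L'-L)),
      _root_.abs_of_pos (by positivity : (0:ℝ) < L * L'), div_le_div_iff₀ (by positivity) hL'0]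
    nlinarith
  have hsnorm : ‖E * (((m:ℂ) + 1) / (I * (L':ℂ)) - (m:ℂ) / (I * (L:ℂ)))‖ ≤ 1 / L' := by
    rw [hs_eq, norm_mul, norm_mul, hEnorm, norm_neg, Complex.norm_I, one_mul, one_mul]
    rw [Complex.norm_real, Real.norm_eq_abs]
    exact hratio
  have hfnorm : ((m:ℝ) + 1) * Real.sin φ / L' ≤ ‖((m:ℂ) + 1) * (E' - E) / (I * (L':ℂ))‖ := by
    rw [norm_div, norm_mul, norm_mul, Complex.norm_I, one_mul]
    rw [show ((m:ℂ) + 1) = (((m:ℝ) + 1 : ℝ) : ℂ) by push_cast; ring]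
    rw [Complex.norm_real, Real.norm_eq_abs, _root_.abs_of_pos (by positivity : (0:ℝ) < (m:ℝ)+1),
      Complex.norm_real, Real.norm_eq_abs, _root_.abs_of_pos hL'0]
    gcongr
  have hmain : (((m:ℝ) + 1) * (15/32) - 1) / L' ≤
      ‖((m + 1 : ℕ) : ℂ) * E' / (I * (L':ℂ)) - (m : ℂ) * E / (I * (L:ℂ))‖ := by
    rw [hdecomp]
    have htri := norm_sub_norm_le (((m:ℂ) + 1) * (E' - E) / (I * (L':ℂ)))
        (-(E * (((m:ℂ) + 1) / (I * (L':ℂ)) - (m:ℂ) / (I * (L:ℂ)))))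
    rw [sub_neg_eq_add, norm_neg] at htri
    have h1 : (((m:ℝ) + 1) * (15/32) - 1) / L' ≤
        ((m:ℝ) + 1) * Real.sin φ / L' - 1 / L' := by
      rw [div_sub_div_same]
      gcongr

    linarith
  have hfinal : t / (8 * Real.log t) ≤ (((m:ℝ) + 1) * (15/32) - 1) / L' := by
    have hlogt : 1 < Real.log t := by
      rw [show (1:ℝ) = Real.log (Real.exp 1) from (Real.log_exp 1).symm]
      exact Real.log_lt_log (Real.exp_pos 1) ht
    have hL'le : L' ≤ 2 * Real.log t := by
      have h1 : L' ≤ Real.log (2*t) := Real.log_le_log (by positivity) (by linarith)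
      have h2 : Real.log (2*t) = Real.log 2 + Real.log t :=
        Real.log_mul (by norm_num) (by positivity)
      have h3 : Real.log 2 ≤ 1 := by
        have := Real.log_le_sub_one_of_pos (x := (2:ℝ)) (by norm_num)
        linarith
      linarith
    have hnum : (7:ℝ)/24 * t ≤ ((m:ℝ) + 1) * (15/32) - 1 := by
      have hm3' : (3:ℝ) ≤ (m:ℝ) := by exact_mod_cast hm3
      nlinarith
    calc t / (8 * Real.log t) ≤ (7/24 * t) / (2 * Real.log t) := by
          rw [div_le_div_iff₀ (by positivity) (by positivity)]
          nlinarith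
      _ ≤ (7/24 * t) / L' := by gcongr
      _ ≤ (((m:ℝ) + 1) * (15/32) - 1) / L' := by gcongr
  rw [hlogcast]
  exact hfinal.trans hmain

lemma cdiff_le (K a : ℕ) :
    ‖(((min (a + 1) (2 * K - (a + 1)) : ℕ)) : ℂ) - ((min a (2 * K - a) : ℕ) : ℂ)‖ ≤ 1 := by
  set u := min (a + 1) (2 * K - (a + 1)) with hu
  set v := min a (2 * K - a) with hv
  have h1 : v ≤ u + 1 := by omega
  have h2 : u ≤ v + 1 := by omega
  have heq : ((u : ℂ)) - (v : ℂ) = (((u : ℝ) - (v : ℝ) : ℝ) : ℂ) := by push_cast; ring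
  rw [heq, Complex.norm_real, Real.norm_eq_abs, abs_le]
  have h1' : (v : ℝ) ≤ (u : ℝ) + 1 := by exact_mod_cast h1
  have h2' : (u : ℝ) ≤ (v : ℝ) + 1 := by exact_mod_cast h2
  constructor <;> linarith


/-- Lower bound: there is `m₀ > 0` such that for every `t > e` there is a nonzero witness
sequence `x^{(t)}` (one may take `c_n = n` for `n ≤ 2t`, `c_n = 4t - n` for `2t < n ≤ 4t`,
`c_n = 0` otherwise) with `‖T(t)A⁻¹ x^{(t)}‖₁ ≥ m₀ (t / log t) ‖x^{(t)}‖₁`; hence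
`‖T(t)A⁻¹‖ ≥ m₀ t / log t` for all `t > e`. -/
theorem TAinv_norm_lower :
    ∃ m₀ : ℝ, 0 < m₀ ∧ ∀ t : ℝ, Real.exp 1 < t → ∃ c : ℕ → ℂ,
      Summable (fun n : ℕ => ‖c (n + 3) - c (n + 2)‖ ^ 2) ∧
      0 < Real.sqrt (normOneSq c) ∧
      m₀ * (t / Real.log t) * Real.sqrt (normOneSq c) ≤
        Real.sqrt (normOneSq (TAinv t c)) := by
  refine ⟨1/64, by norm_num, fun t ht => ?_⟩
  have ht0 : (0:ℝ) < t := (Real.exp_pos 1).trans ht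
  have ht27 : (2.7:ℝ) < t := by nlinarith [Real.exp_one_gt_d9]
  have hlogt : 1 < Real.log t := by
    rw [show (1:ℝ) = Real.log (Real.exp 1) from (Real.log_exp 1).symm]
    exact Real.log_lt_log (Real.exp_pos 1) ht
  set K := ⌈2*t⌉₊ with hKdef
  have hK1 : 2*t ≤ (K:ℝ) := Nat.le_ceil _
  have hK2 : (K:ℝ) < 2*t + 1 := Nat.ceil_lt_add_one (by positivity)
  set c : ℕ → ℂ := fun n => ((min n (2*K - n) : ℕ) : ℂ) with hcdef
  have hczero : ∀ n, 2*K ≤ n → c n = 0 := by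
    intro n hn
    have : min n (2*K - n) = 0 := by omega
    simp [hcdef, this]
  have hsum_c : Summable (fun n => ‖c (n+3) - c (n+2)‖^2) := by
    apply summable_of_ne_finset_zero (s := Finset.range (2*K))
    intro n hn
    rw [Finset.mem_range, not_lt] at hn
    rw [hczero (n+3) (by omega), hczero (n+2) (by omega)]
    simp
  have hTzero : ∀ n, 2*K ≤ n → TAinv t c n = 0 := by
    intro n hn
    unfold TAinv
    rw [hczero n hn]
    simp
  have hsum_T : Summable (fun n => ‖TAinv t c (n+3) - TAinv t c (n+2)‖^2) := by
    apply summable_of_ne_finset_zero (s := Finset.range (2*K))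
    intro n hn
    rw [Finset.mem_range, not_lt] at hn
    rw [hTzero (n+3) (by omega), hTzero (n+2) (by omega)]
    simp
  have hK6 : 6 ≤ K := by
    have h5 : (5:ℝ) < (K:ℝ) := by linarith
    exact_mod_cast h5
  have hcval : ∀ n, n ≤ K → c n = (n:ℂ) := by
    intro n hn
    have : min n (2*K - n) = n := by omega
    simp [hcdef, this]
  have hc2 : c 2 = (2:ℂ) := by rw [hcval 2 (by omega)]; norm_num
  -- positivity of the norm
  have hnormc4 : (4:ℝ) ≤ normOneSq c := by
    unfold normOneSq
    rw [hc2]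
    have h1 : (0:ℝ) ≤ ∑' n : ℕ, ‖c (n + 3) - c (n + 2)‖ ^ 2 :=
      tsum_nonneg (fun n => by positivity)
    have h2 : ‖(2:ℂ)‖^2 = 4 := by norm_num
    linarith
  have hposc : 0 < Real.sqrt (normOneSq c) := Real.sqrt_pos.mpr (by linarith)
  refine ⟨c, hsum_c, hposc, ?_⟩
  -- upper bound on normOneSq c
  have hA : normOneSq c ≤ 7*t := by
    unfold normOneSq
    rw [hc2]
    have htsum_eq : ∑' n : ℕ, ‖c (n + 3) - c (n + 2)‖ ^ 2 =
        ∑ n ∈ Finset.range (2*K), ‖c (n + 3) - c (n + 2)‖ ^ 2 := by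
      apply tsum_eq_sum
      intro n hn
      rw [Finset.mem_range, not_lt] at hn
      rw [hczero (n+3) (by omega), hczero (n+2) (by omega)]
      simp
    have hbound : ∑ n ∈ Finset.range (2*K), ‖c (n + 3) - c (n + 2)‖ ^ 2 ≤ (2*K : ℝ) := by
      calc ∑ n ∈ Finset.range (2*K), ‖c (n + 3) - c (n + 2)‖ ^ 2
          ≤ ∑ n ∈ Finset.range (2*K), (1:ℝ) := by
            apply Finset.sum_le_sum
            intro n _
            have h1 : ‖c (n+3) - c (n+2)‖ ≤ 1 := by
              have := cdiff_le K (n+2)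
              simpa [hcdef, show n+2+1 = n+3 by omega] using this
            nlinarith [norm_nonneg (c (n+3) - c (n+2))]
        _ = (2*K : ℝ) := by simp
    rw [htsum_eq]
    have h2 : ‖(2:ℂ)‖^2 = 4 := by norm_num
    have : (2*K : ℝ) ≤ 4*t + 2 := by push_cast; linarith
    rw [h2]
    linarith
  -- lower bound on normOneSq (TAinv t c)
  set a := ⌈t⌉₊ with hadef
  set b := ⌊2*t⌋₊ with hbdef
  have ha1 : t ≤ (a:ℝ) := Nat.le_ceil _
  have ha2 : (a:ℝ) < t + 1 := Nat.ceil_lt_add_one ht0.le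
  have hb1 : (b:ℝ) ≤ 2*t := Nat.floor_le (by positivity)
  have hb2 : 2*t < (b:ℝ) + 1 := Nat.lt_floor_add_one _
  have ha3 : 3 ≤ a := by
    have : (2:ℝ) < (a:ℝ) := by linarith
    exact_mod_cast this
  have hab : a < b := by
    have : (a:ℝ) < (b:ℝ) := by linarith
    exact_mod_cast this
  have hbK : b ≤ K := by
    have : (b:ℝ) ≤ (K:ℝ) := by linarith
    exact_mod_cast this
  set S := Finset.Ico (a-2) (b-2) with hSdef
  have hcard : S.card = b - a := by
    rw [hSdef, Nat.card_Ico]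
    omega
  have hperterm : ∀ n ∈ S, (t/(8*Real.log t))^2 ≤ ‖TAinv t c (n+3) - TAinv t c (n+2)‖^2 := by
    intro n hn
    rw [hSdef, Finset.mem_Ico] at hn
    have hn2a : a ≤ n + 2 := by omega
    have hn3b : n + 3 ≤ b := by omega
    have hm1 : t ≤ ((n+2 : ℕ):ℝ) := by
      calc t ≤ (a:ℝ) := ha1
        _ ≤ ((n+2:ℕ):ℝ) := by exact_mod_cast hn2a
    have hm2 : ((n+2:ℕ):ℝ) + 1 ≤ 2*t := by
      have : ((n+3:ℕ):ℝ) ≤ (b:ℝ) := by exact_mod_cast hn3b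
      push_cast at this ⊢
      linarith
    have h1 := key_term t (n+2) ht hm1 hm2
    rw [show (n+2)+1 = n+3 by omega] at h1
    have e2 : TAinv t c (n+2) =
        ((n+2:ℕ):ℂ) * Complex.exp (I * t * Real.log ((n+2:ℕ):ℝ)) / (I * Real.log ((n+2:ℕ):ℝ)) := by
      unfold TAinv
      rw [hcval (n+2) (by omega)]
    have e3 : TAinv t c (n+3) =
        ((n+3:ℕ):ℂ) * Complex.exp (I * t * Real.log ((n+3:ℕ):ℝ)) / (I * Real.log ((n+3:ℕ):ℝ)) := by
      unfold TAinv
      rw [hcval (n+3) (by omega)]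
    rw [e2, e3]
    have hq : (0:ℝ) ≤ t/(8*Real.log t) := by positivity
    exact pow_le_pow_left₀ hq h1 2
  have hsumlow : ((b:ℝ) - (a:ℝ)) * (t/(8*Real.log t))^2 ≤
      ∑ n ∈ S, ‖TAinv t c (n+3) - TAinv t c (n+2)‖^2 := by
    have := Finset.card_nsmul_le_sum S (fun n => ‖TAinv t c (n+3) - TAinv t c (n+2)‖^2)
      ((t/(8*Real.log t))^2) hperterm
    rw [nsmul_eq_mul, hcard] at this
    have hcast : ((b - a : ℕ):ℝ) = (b:ℝ) - (a:ℝ) := by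
      rw [Nat.cast_sub hab.le]
    rw [hcast] at this
    exact this
  have hB : (t/4) * (t/(8*Real.log t))^2 ≤ normOneSq (TAinv t c) := by
    have h1 : ∑ n ∈ S, ‖TAinv t c (n+3) - TAinv t c (n+2)‖^2 ≤
        ∑' n : ℕ, ‖TAinv t c (n+3) - TAinv t c (n+2)‖^2 :=
      Summable.sum_le_tsum S (fun n _ => by positivity) hsum_T
    have h2 : ∑' n : ℕ, ‖TAinv t c (n+3) - TAinv t c (n+2)‖^2 ≤ normOneSq (TAinv t c) := by
      unfold normOneSq
      have : (0:ℝ) ≤ ‖TAinv t c 2‖^2 := by positivity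
      linarith
    have h3 : t/4 ≤ (b:ℝ) - (a:ℝ) := by linarith
    have h4 : (t/4) * (t/(8*Real.log t))^2 ≤ ((b:ℝ) - (a:ℝ)) * (t/(8*Real.log t))^2 := by
      apply mul_le_mul_of_nonneg_right h3 (by positivity)
    linarith
  -- conclude
  have hstep1 : 1/64 * (t / Real.log t) * Real.sqrt (normOneSq c) ≤
      1/64 * (t / Real.log t) * Real.sqrt (7*t) := by
    have := Real.sqrt_le_sqrt hA
    apply mul_le_mul_of_nonneg_left this (by positivity)
  have hstep2 : Real.sqrt ((t/4) * (t/(8*Real.log t))^2) ≤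
      Real.sqrt (normOneSq (TAinv t c)) := Real.sqrt_le_sqrt hB
  have hstep3 : 1/64 * (t / Real.log t) * Real.sqrt (7*t) ≤
      Real.sqrt ((t/4) * (t/(8*Real.log t))^2) := by
    rw [Real.le_sqrt (by positivity) (by positivity)]
    have hs : Real.sqrt (7*t)^2 = 7*t := Real.sq_sqrt (by positivity)
    have hl : (0:ℝ) < Real.log t := by linarith
    rw [mul_pow, mul_pow, hs]
    rw [div_pow, div_pow]
    have e1 : (1:ℝ)^2/64^2 * (t^2/Real.log t^2) * (7*t) = (7/4096) * (t^3 / Real.log t^2) := by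
      ring
    have e2 : t/4 * (t/(8*Real.log t))^2 = (1/256) * (t^3 / Real.log t^2) := by
      rw [div_pow, mul_pow]
      field_simp
      ring
    rw [e1, e2]
    have hX : (0:ℝ) ≤ t^3 / Real.log t^2 := by positivity
    nlinarith
  linarith
end
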